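/- arXiv:1302.3695 — 4 statements merged into one kernel-verified Lean document; each statement's English description precedes it below -/
import Mathlib

section
/- Let 0 < T < ∞ and let φ : [0, T] → ℂ be integrable with φ(t) = (T - t)^σ h(T - t), where Re σ > -1, h(0) ≠ 0, and h is differentiable with bounded derivative in a neighborhood of 0. Then Φ(λ) = ∫_0^T φ(t) e^{λ t} dt satisfies Φ(λ) = h(0) Γ(σ+1) λ^{-σ-1} e^{Tλ} + O(λ^{-σ-2} e^{Tλ}) as λ → ∞ with |arg λ| ≤ θ for any fixed 0 ≤ θ < π/2. -/
open MeasureTheory intervalIntegral Complex Filter Asymptotics Set Topology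

private lemma norm_cpow_exp' (σ : ℂ) (lam : ℂ) {t : ℝ} (ht : 0 < t) :
    ‖(t:ℂ) ^ σ * Complex.exp (-(lam * t))‖ = t ^ σ.re * Real.exp (-(lam.re * t)) := by
  rw [norm_mul, Complex.norm_cpow_eq_rpow_re_of_pos ht,
    Complex.norm_exp]
  congr 2
  simp [Complex.mul_re]

private lemma integrableOn_rpow_exp' {s : ℝ} (hs : -1 < s) {b : ℝ} (hb : 0 < b) :
    IntegrableOn (fun t : ℝ => t ^ s * Real.exp (-(b * t))) (Ioi 0) := by
  have := integrableOn_rpow_mul_exp_neg_mul_rpow hs zero_lt_one hb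
  refine this.congr_fun (fun t ht => by simp only [Real.rpow_one]; ring_nf) measurableSet_Ioi

private lemma aesm_cpow_exp' (σ : ℂ) (lam : ℂ) :
    AEStronglyMeasurable (fun t : ℝ => (t:ℂ) ^ σ * Complex.exp (-(lam * t)))
      (volume.restrict (Ioi 0)) := by
  apply AEStronglyMeasurable.mul
  · refine (continuousOn_of_forall_continuousAt (fun x hx =>
      Complex.continuousAt_ofReal_cpow_const x σ (Or.inr (ne_of_gt hx)))).aestronglyMeasurable
      measurableSet_Ioi
  · exact (Complex.continuous_exp.comp (by continuity)).aestronglyMeasurable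

private lemma integrableOn_cpow_exp' {σ : ℂ} (hσ : -1 < σ.re) {lam : ℂ} (hl : 0 < lam.re) :
    IntegrableOn (fun t : ℝ => (t:ℂ) ^ σ * Complex.exp (-(lam * t))) (Ioi 0) := by
  refine Integrable.mono' (integrableOn_rpow_exp' hσ hl) (aesm_cpow_exp' σ lam) ?_
  filter_upwards [ae_restrict_mem measurableSet_Ioi] with t ht
  rw [norm_cpow_exp' σ lam ht]

private lemma hasDerivAt_F' {σ : ℂ} (hσ : -1 < σ.re) {lam : ℂ} (hl : 0 < lam.re) :
    HasDerivAt (fun x : ℂ => ∫ t in Ioi (0:ℝ), (t:ℂ) ^ σ * Complex.exp (-(x * t)))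
      (∫ t in Ioi (0:ℝ), (t:ℂ) ^ σ * (Complex.exp (-(lam * t)) * -(t:ℂ))) lam := by
  set ε := lam.re / 2 with hε
  have hε0 : 0 < ε := by positivity
  have key := _root_.hasDerivAt_integral_of_dominated_loc_of_deriv_le
    (μ := volume.restrict (Ioi 0))
    (F := fun (x : ℂ) (t : ℝ) => (t:ℂ) ^ σ * Complex.exp (-(x * t)))
    (F' := fun (x : ℂ) (t : ℝ) => (t:ℂ) ^ σ * (Complex.exp (-(x * t)) * -(t:ℂ)))
    (x₀ := lam) (bound := fun t : ℝ => t ^ (σ.re + 1) * Real.exp (-(ε * t)))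
    (Metric.ball_mem_nhds lam hε0) ?_ ?_ ?_ ?_ ?_ ?_
  · exact key.2
  · exact Eventually.of_forall fun x => aesm_cpow_exp' σ x
  · exact integrableOn_cpow_exp' hσ hl
  · exact ((aesm_cpow_exp' σ lam).mul
      ((Complex.continuous_ofReal.neg).aestronglyMeasurable)).congr
      (Eventually.of_forall fun t => by simp [Pi.mul_apply]; ring)
  · filter_upwards [ae_restrict_mem measurableSet_Ioi] with t ht x hx
    have hxre : ε ≤ x.re := by
      have hd : ‖x - lam‖ < ε := by
        simpa [Metric.mem_ball, Complex.dist_eq] using hx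
      have : |x.re - lam.re| < ε := by
        calc |x.re - lam.re| = |(x - lam).re| := by simp
        _ ≤ ‖x - lam‖ := abs_re_le_norm _
        _ < ε := hd
      have := abs_lt.mp this
      linarith
    rw [norm_mul, norm_mul, norm_neg]
    rw [show ‖(t:ℂ)^σ‖ = t ^ σ.re from by
      rw [Complex.norm_cpow_eq_rpow_re_of_pos ht]]
    rw [show ‖Complex.exp (-(x * t))‖ = Real.exp (-(x.re * t)) from by
      rw [Complex.norm_exp]; congr 1; simp [Complex.mul_re]]
    rw [show ‖(t:ℂ)‖ = t from by simp [abs_of_pos (show (0:ℝ) < t from ht)]]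
    rw [Real.rpow_add_one (ne_of_gt ht)]
    have h1 : Real.exp (-(x.re * t)) ≤ Real.exp (-(ε * t)) := by
      apply Real.exp_le_exp.mpr
      have ht' : (0:ℝ) < t := ht
      nlinarith
    calc t ^ σ.re * (Real.exp (-(x.re * t)) * t)
        = t ^ σ.re * t * Real.exp (-(x.re * t)) := by ring
      _ ≤ t ^ σ.re * t * Real.exp (-(ε * t)) := by
          apply mul_le_mul_of_nonneg_left h1
          have ht' : (0:ℝ) < t := ht
          positivity
  · exact integrableOn_rpow_exp' (by linarith) hε0
  · filter_upwards [ae_restrict_mem measurableSet_Ioi] with t ht x hx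
    have : HasDerivAt (fun x : ℂ => -(x * t)) (-(t:ℂ)) x :=
      (hasDerivAt_mul_const (t:ℂ)).neg
    exact (this.cexp).const_mul _

private lemma gamma_scale {σ : ℂ} (hσ : -1 < σ.re) {lam : ℂ} (hl : 0 < lam.re) :
    ∫ t in Ioi (0:ℝ), (t:ℂ) ^ σ * Complex.exp (-(lam * t))
      = Complex.Gamma (σ + 1) * lam ^ (-(σ + 1)) := by
  set U : Set ℂ := {z : ℂ | 0 < z.re} with hU
  have hUopen : IsOpen U := isOpen_lt continuous_const Complex.continuous_re
  have hUconn : IsPreconnected U := (convex_halfSpace_re_gt 0).isPreconnected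
  set F : ℂ → ℂ := fun x => ∫ t in Ioi (0:ℝ), (t:ℂ) ^ σ * Complex.exp (-(x * t)) with hF
  set G : ℂ → ℂ := fun x => Complex.Gamma (σ + 1) * x ^ (-(σ + 1)) with hG
  have hFa : AnalyticOnNhd ℂ F U := by
    refine DifferentiableOn.analyticOnNhd (fun z hz => ?_) hUopen
    exact (hasDerivAt_F' hσ hz).differentiableAt.differentiableWithinAt
  have hGa : AnalyticOnNhd ℂ G U := by
    refine DifferentiableOn.analyticOnNhd (fun z hz => ?_) hUopen
    refine DifferentiableAt.differentiableWithinAt ?_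
    exact ((differentiableAt_id.cpow (differentiableAt_const _) (Or.inl hz))).const_mul _
  have hreal : ∀ x : ℝ, 0 < x → F x = G x := by
    intro x hx
    have h1 : (0:ℝ) < (σ + 1).re := by simp; linarith
    have := Complex.integral_cpow_mul_exp_neg_mul_Ioi (a := σ + 1) (by simpa using h1) hx
    simp only [add_sub_cancel_right] at this
    show (∫ t in Ioi (0:ℝ), (t:ℂ) ^ σ * Complex.exp (-((x:ℂ) * t)))
      = Complex.Gamma (σ + 1) * (x:ℂ) ^ (-(σ + 1))
    rw [this, one_div, Complex.inv_cpow, ← Complex.cpow_neg, mul_comm]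
    rw [Complex.arg_ofReal_of_nonneg hx.le]
    exact Real.pi_ne_zero.symm
  have h1U : (1:ℂ) ∈ U := by simp [hU]
  have hfreq : ∃ᶠ z in 𝓝[≠] (1:ℂ), F z = G z := by
    have htend : Tendsto (fun n : ℕ => (1 + (1:ℂ)/(n+1))) atTop (𝓝[≠] (1:ℂ)) := by
      apply tendsto_nhdsWithin_of_tendsto_nhds_of_eventually_within
      · have : Tendsto (fun n : ℕ => (1:ℂ)/(n+1)) atTop (𝓝 0) := by
          simpa using tendsto_one_div_add_atTop_nhds_zero_nat.ofReal.congr (by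
            intro n; push_cast; ring)
        simpa using tendsto_const_nhds.add this
      · filter_upwards with n
        simp only [Set.mem_compl_iff, Set.mem_singleton_iff]
        intro hcon
        have : (1:ℂ)/(n+1) = 0 := by linear_combination hcon
        simp at this
        exact Nat.cast_add_one_ne_zero n this
    refine htend.frequently (Frequently.of_forall fun n => ?_)
    have hx : (0:ℝ) < 1 + 1/(n+1) := by positivity
    have := hreal (1 + 1/(n+1)) hx
    convert this using 2 <;> push_cast <;> ring
  have := hFa.eqOn_of_preconnected_of_frequently_eq hGa hUconn h1U hfreq
  exact this hl

set_option maxHeartbeats 1000000 in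
/-- Corollary of Watson's lemma: asymptotics of `∫_0^T φ(t) e^{λt} dt` as `λ → ∞`
in the sector `|arg λ| ≤ θ`, when `φ(t) = (T-t)^σ h(T-t)`. -/
theorem watson_corollary_left_endpoint
    (T : ℝ) (hT : 0 < T)
    (σ : ℂ) (hσ : -1 < σ.re)
    (φ h : ℝ → ℂ)
    (hint : IntervalIntegrable φ volume 0 T)
    (hφ : ∀ t ∈ Set.Icc 0 T, φ t = ((T - t : ℝ) : ℂ) ^ σ * h (T - t))
    (hh0 : h 0 ≠ 0)
    (hh : ∃ δ > (0 : ℝ), (∀ t ∈ Set.Icc (0 : ℝ) δ, DifferentiableAt ℝ h t) ∧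
          ∃ M : ℝ, ∀ t ∈ Set.Icc (0 : ℝ) δ, ‖deriv h t‖ ≤ M)
    (θ : ℝ) (hθ₀ : 0 ≤ θ) (hθ : θ < Real.pi / 2) :
    (fun lam : ℂ =>
        (∫ t in (0 : ℝ)..T, φ t * Complex.exp (lam * t)) -
          h 0 * Complex.Gamma (σ + 1) * lam ^ (-σ - 1) * Complex.exp (T * lam))
      =O[comap (‖·‖) atTop ⊓ 𝓟 {lam : ℂ | |Complex.arg lam| ≤ θ}]
      (fun lam : ℂ => lam ^ (-σ - 2) * Complex.exp (T * lam)) := by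
  obtain ⟨δ₀, hδ₀, hdiff, M, hM⟩ := hh
  set a : ℝ := σ.re with ha
  set δ : ℝ := min δ₀ T with hδdef
  have hδpos : 0 < δ := lt_min hδ₀ hT
  have hδT : δ ≤ T := min_le_right _ _
  set cθ : ℝ := Real.cos θ with hcθdef
  have hcθ : 0 < cθ := Real.cos_pos_of_mem_Ioo ⟨by linarith [Real.pi_pos], hθ⟩
  have hM0 : 0 ≤ M := le_trans (norm_nonneg _) (hM 0 ⟨le_rfl, hδ₀.le⟩)
  -- mean value estimate
  have hsub : ∀ u ∈ Icc (0:ℝ) δ, ‖h u - h 0‖ ≤ M * u := by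
    intro u hu
    have hu' : u ∈ Icc (0:ℝ) δ₀ := ⟨hu.1, hu.2.trans (min_le_left _ _)⟩
    have := Convex.norm_image_sub_le_of_norm_deriv_le hdiff hM (convex_Icc 0 δ₀)
      (left_mem_Icc.mpr hδ₀.le) hu'
    simpa [_root_.abs_of_nonneg hu.1] using this
  -- integrability of u^σ h u on (0, T]
  have hIntOn : IntegrableOn (fun u : ℝ => (u:ℂ)^σ * h u) (Ioc 0 T) volume := by
    have h1 : IntervalIntegrable (fun u => φ (T - u)) volume 0 T := by
      have := hint.comp_sub_left T enorm_ne_top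
      simpa using this.symm
    have h2 := (intervalIntegrable_iff_integrableOn_Ioc_of_le hT.le).mp h1
    refine h2.congr_fun (fun u hu => ?_) measurableSet_Ioc
    have := hφ (T - u) ⟨by linarith [hu.2], by linarith [hu.1.le]⟩
    beta_reduce; rw [this]
    norm_num
  -- integrability of u^σ (h u - h 0) on (δ, T]
  have hIntcpow : IntegrableOn (fun u : ℝ => (u:ℂ)^σ) (Ioc δ T) volume := by
    have hc : ContinuousOn (fun u : ℝ => (u:ℂ)^σ) (Icc δ T) :=
      continuousOn_of_forall_continuousAt (fun x hx =>
        Complex.continuousAt_ofReal_cpow_const x σ (Or.inr (by nlinarith [hx.1] : x ≠ 0)))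
    exact (hc.integrableOn_Icc).mono_set Ioc_subset_Icc_self
  have hIntK2 : IntegrableOn (fun u : ℝ => (u:ℂ)^σ * (h u - h 0)) (Ioc δ T) volume := by
    have h2 := (hIntOn.mono_set (Ioc_subset_Ioc_left hδpos.le)).sub (hIntcpow.mul_const (h 0))
    refine IntegrableOn.congr_fun h2 (fun u hu => by simp [Pi.sub_apply]; ring) measurableSet_Ioc
  set K2 : ℝ := ∫ u in Ioc δ T, ‖(u:ℂ)^σ * (h u - h 0)‖ with hK2def
  have hK2nn : 0 ≤ K2 := integral_nonneg (fun u => norm_nonneg _)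
  set K3 : ℝ := ∫ u in Ioi (0:ℝ), u ^ a * Real.exp (-(1 * u)) with hK3def
  have hK3int : IntegrableOn (fun u : ℝ => u ^ a * Real.exp (-(1 * u))) (Ioi 0) :=
    integrableOn_rpow_exp' hσ one_pos
  have hK3nn : 0 ≤ K3 := by
    refine setIntegral_nonneg measurableSet_Ioi (fun u hu => ?_)
    have : (0:ℝ) < u := hu
    positivity
  -- eventual real conditions
  have hev : ∀ᶠ x in atTop, 1 ≤ x ∧ 2 ≤ cθ * x ∧
      Real.exp (-(cθ * x * δ)) ≤ x ^ (-(a+2)) ∧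
      Real.exp (-((cθ * x - 1) * T)) ≤ x ^ (-(a+2)) := by
    have e1 : ∀ᶠ x : ℝ in atTop, (1:ℝ) ≤ x := eventually_ge_atTop 1
    have e2 : ∀ᶠ x : ℝ in atTop, (2:ℝ) ≤ cθ * x := by
      have : Tendsto (fun x : ℝ => cθ * x) atTop atTop :=
        Tendsto.const_mul_atTop hcθ tendsto_id
      exact this.eventually_ge_atTop 2
    have key : ∀ b : ℝ, 0 < b → ∀ c : ℝ, ∀ᶠ x : ℝ in atTop,
        c * Real.exp (-(b * x)) ≤ x ^ (-(a+2)) := by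
      intro b hb c
      have ht := tendsto_rpow_mul_exp_neg_mul_atTop_nhds_zero (a+2) b hb
      have ht2 : Tendsto (fun x : ℝ => c * (x ^ (a+2) * Real.exp (-b * x))) atTop (𝓝 0) := by
        simpa using ht.const_mul c
      filter_upwards [ht2.eventually_le_const one_pos, eventually_ge_atTop (1:ℝ)]
        with x hle hx1
      have hx0 : (0:ℝ) < x := lt_of_lt_of_le one_pos hx1
      have hxp : (0:ℝ) < x ^ (a+2) := Real.rpow_pos_of_pos hx0 _
      rw [Real.rpow_neg hx0.le, ← one_div]
      rw [le_div_iff₀ hxp]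
      calc c * Real.exp (-(b * x)) * x ^ (a+2)
          = c * (x ^ (a+2) * Real.exp (-b * x)) := by rw [neg_mul]; ring
        _ ≤ 1 := hle
    have e3 : ∀ᶠ x : ℝ in atTop, Real.exp (-(cθ * x * δ)) ≤ x ^ (-(a+2)) := by
      filter_upwards [key (cθ * δ) (by positivity) 1] with x hx
      calc Real.exp (-(cθ * x * δ)) = 1 * Real.exp (-(cθ * δ * x)) := by ring_nf
        _ ≤ x ^ (-(a+2)) := hx
    have e4 : ∀ᶠ x : ℝ in atTop, Real.exp (-((cθ * x - 1) * T)) ≤ x ^ (-(a+2)) := by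
      filter_upwards [key (cθ * T) (by positivity) (Real.exp T)] with x hx
      calc Real.exp (-((cθ * x - 1) * T))
          = Real.exp T * Real.exp (-(cθ * T * x)) := by
            rw [← Real.exp_add]; ring_nf
        _ ≤ x ^ (-(a+2)) := hx
    filter_upwards [e1, e2, e3, e4] with x h1 h2 h3 h4
    exact ⟨h1, h2, h3, h4⟩

  rw [isBigO_iff]
  refine ⟨(M * Real.Gamma (a+2) * cθ ^ (-(a+2)) + K2 + ‖h 0‖ * K3) * Real.exp (|σ.im| * θ), ?_⟩
  rw [Filter.eventually_inf_principal]
  filter_upwards [hev.comap (‖·‖)] with lam hx hargS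
  obtain ⟨hx1, hcx2, hexp1, hexp2⟩ := hx
  have harg : |Complex.arg lam| ≤ θ := hargS
  set x : ℝ := ‖lam‖ with hxdef
  set r : ℝ := lam.re with hrdef
  have hx0 : 0 < x := lt_of_lt_of_le one_pos hx1
  have hlam0 : lam ≠ 0 := by
    intro hc; rw [hc] at hxdef; simp [hxdef] at hx0
  have hrx : cθ * x ≤ r := by
    have hcos := Complex.cos_arg hlam0
    have h1 : Real.cos θ ≤ Real.cos (Complex.arg lam) := by
      rw [← Real.cos_abs (Complex.arg lam)]
      exact Real.cos_le_cos_of_nonneg_of_le_pi (abs_nonneg _)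
        (by linarith [Real.pi_pos]) harg
    have : r = x * Real.cos (Complex.arg lam) := by
      field_simp at hcos
      linarith [hcos]
    rw [this]
    calc cθ * x ≤ Real.cos (Complex.arg lam) * x := by
          exact mul_le_mul_of_nonneg_right h1 hx0.le
      _ = x * Real.cos (Complex.arg lam) := mul_comm _ _
  have hr2 : 2 ≤ r := le_trans hcx2 hrx
  have hr0 : 0 < r := by linarith
  
  have hr0' : 0 < lam.re := hr0
  set f : ℝ → ℂ := fun u => (u:ℂ)^σ * (h u - h 0) * Complex.exp (-(lam * u)) with hfdef
  set g : ℝ → ℂ := fun u => (u:ℂ)^σ * Complex.exp (-(lam * u)) with hgdef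
  have hg_int : IntegrableOn g (Ioi 0) := integrableOn_cpow_exp' hσ hr0'
  have hgT : IntegrableOn g (Ioc 0 T) := hg_int.mono_set Ioc_subset_Ioi_self
  have hgI : IntegrableOn g (Ioi T) := hg_int.mono_set (Ioi_subset_Ioi hT.le)
  have hfh : IntegrableOn (fun u : ℝ => (u:ℂ)^σ * h u * Complex.exp (-(lam*u))) (Ioc 0 T) := by
    have hb : ∀ᵐ u : ℝ ∂(volume.restrict (Ioc (0:ℝ) T)),
        ‖Complex.exp (-(lam * (u:ℂ)))‖ ≤ 1 := by
      filter_upwards [ae_restrict_mem measurableSet_Ioc] with u hu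
      rw [Complex.norm_exp]
      rw [show (-(lam * (u:ℂ))).re = -(r * u) from by simp [Complex.mul_re, hrdef]]
      rw [Real.exp_le_one_iff]
      have := hu.1
      nlinarith
    have h2 := Integrable.bdd_mul (c := 1) (μ := volume.restrict (Ioc (0:ℝ) T))
      (f := fun u : ℝ => Complex.exp (-(lam * (u:ℂ))))
      (g := fun u : ℝ => (u:ℂ)^σ * h u)
      hIntOn
      ((Complex.continuous_exp.comp
        ((continuous_const.mul Complex.continuous_ofReal).neg)).aestronglyMeasurable) hb
    exact IntegrableOn.congr_fun h2 (fun u hu => mul_comm _ _) measurableSet_Ioc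
  have hfT : IntegrableOn f (Ioc 0 T) := by
    have h2 := hfh.sub (hgT.const_mul (h 0))
    refine IntegrableOn.congr_fun h2 (fun u hu => by simp only [Pi.sub_apply, hgdef]; ring)
      measurableSet_Ioc
  have step1 : (∫ t in (0:ℝ)..T, φ t * Complex.exp (lam * t))
      = Complex.exp (T*lam) * ∫ u in Ioc (0:ℝ) T, (u:ℂ)^σ * h u * Complex.exp (-(lam*u)) := by
    have hcongr : EqOn (fun t : ℝ => φ t * Complex.exp (lam * t))
        (fun t : ℝ => (fun u : ℝ => ((u:ℂ)^σ * h u) *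
          (Complex.exp (T*lam) * Complex.exp (-(lam*u)))) (T - t)) (uIcc (0:ℝ) T) := by
      intro t ht
      rw [uIcc_of_le hT.le] at ht
      simp only
      rw [hφ t ht, ← Complex.exp_add]
      rw [show (↑T * lam + -(lam * ((T:ℝ) - t : ℝ)) : ℂ) = lam * t from by push_cast; ring]
    rw [intervalIntegral.integral_congr hcongr]
    rw [intervalIntegral.integral_comp_sub_left (fun u : ℝ => ((u:ℂ)^σ * h u) *
      (Complex.exp (T*lam) * Complex.exp (-(lam*u)))) T]
    simp only [sub_self, sub_zero]
    rw [intervalIntegral.integral_of_le hT.le]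
    rw [show (fun u : ℝ => ((u:ℂ)^σ * h u) * (Complex.exp (T*lam) * Complex.exp (-(lam*u))))
      = fun u : ℝ => Complex.exp (T*lam) * ((u:ℂ)^σ * h u * Complex.exp (-(lam*u))) from
      funext fun u => by ring]
    rw [MeasureTheory.integral_const_mul]
  have step2 : Complex.Gamma (σ+1) * lam ^ (-σ-1)
      = (∫ u in Ioc (0:ℝ) T, g u) + ∫ u in Ioi T, g u := by
    rw [show (-σ-1 : ℂ) = -(σ+1) from by ring, ← gamma_scale hσ hr0']
    rw [← setIntegral_union (Ioc_disjoint_Ioi le_rfl) measurableSet_Ioi hgT hgI,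
      Ioc_union_Ioi_eq_Ioi hT.le]
  have step3 : (∫ u in Ioc (0:ℝ) T, (u:ℂ)^σ * h u * Complex.exp (-(lam*u)))
        - h 0 * ∫ u in Ioc (0:ℝ) T, g u
      = (∫ u in Ioc (0:ℝ) δ, f u) + ∫ u in Ioc δ T, f u := by
    rw [← MeasureTheory.integral_const_mul, ← MeasureTheory.integral_sub hfh (hgT.const_mul (h 0))]
    rw [← setIntegral_union (Ioc_disjoint_Ioc_of_le le_rfl) measurableSet_Ioc
      (hfT.mono_set (Ioc_subset_Ioc_right hδT)) (hfT.mono_set (Ioc_subset_Ioc_left hδpos.le)),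
      Ioc_union_Ioc_eq_Ioc hδpos.le hδT]
    refine setIntegral_congr_fun measurableSet_Ioc (fun u hu => ?_)
    simp only [hfdef, hgdef]
    ring
  have key : (∫ t in (0:ℝ)..T, φ t * Complex.exp (lam * t)) -
      h 0 * Complex.Gamma (σ + 1) * lam ^ (-σ - 1) * Complex.exp (T * lam)
      = Complex.exp (T*lam) * ((∫ u in Ioc (0:ℝ) δ, f u) + (∫ u in Ioc δ T, f u)
        - h 0 * ∫ u in Ioi T, g u) := by
    rw [step1]
    linear_combination (Complex.exp (T*lam)) * step3 - (h 0 * Complex.exp (T*lam)) * step2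
  -- pointwise norms
  have hnf : ∀ u : ℝ, 0 < u → ‖f u‖ = u ^ a * ‖h u - h 0‖ * Real.exp (-(r * u)) := by
    intro u hu
    simp only [hfdef]
    rw [norm_mul, norm_mul,
      Complex.norm_cpow_eq_rpow_re_of_pos hu,
      Complex.norm_exp]
    rw [show (-(lam * u)).re = -(r * u) from by simp [Complex.mul_re, hrdef]]
  have hng : ∀ u : ℝ, 0 < u → ‖g u‖ = u ^ a * Real.exp (-(r * u)) := by
    intro u hu
    exact norm_cpow_exp' σ lam hu
  -- three bounds
  have bound1 : ‖∫ u in Ioc (0:ℝ) δ, f u‖ ≤ M * ((1/r) ^ (a+2) * Real.Gamma (a+2)) := by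
    have hia : IntegrableOn (fun u : ℝ => u ^ (a+1) * Real.exp (-(r*u))) (Ioi 0) :=
      integrableOn_rpow_exp' (by linarith) hr0
    calc ‖∫ u in Ioc (0:ℝ) δ, f u‖
        ≤ ∫ u in Ioc (0:ℝ) δ, M * (u ^ (a+1) * Real.exp (-(r*u))) := by
          refine norm_integral_le_of_norm_le
            ((hia.mono_set Ioc_subset_Ioi_self).const_mul M) ?_
          filter_upwards [ae_restrict_mem measurableSet_Ioc] with u hu
          rw [hnf u hu.1, Real.rpow_add_one (ne_of_gt hu.1)]
          have h1 : ‖h u - h 0‖ ≤ M * u := hsub u ⟨hu.1.le, hu.2⟩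
          have h2 : (0:ℝ) ≤ u ^ a := Real.rpow_nonneg hu.1.le _
          have h3 : (0:ℝ) ≤ Real.exp (-(r*u)) := (Real.exp_pos _).le
          calc u ^ a * ‖h u - h 0‖ * Real.exp (-(r*u))
              ≤ u ^ a * (M * u) * Real.exp (-(r*u)) := by
                apply mul_le_mul_of_nonneg_right _ h3
                exact mul_le_mul_of_nonneg_left h1 h2
            _ = M * (u ^ a * u * Real.exp (-(r*u))) := by ring
      _ = M * ∫ u in Ioc (0:ℝ) δ, u ^ (a+1) * Real.exp (-(r*u)) := MeasureTheory.integral_const_mul _ _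
      _ ≤ M * ∫ u in Ioi (0:ℝ), u ^ (a+1) * Real.exp (-(r*u)) := by
          refine mul_le_mul_of_nonneg_left ?_ hM0
          refine setIntegral_mono_set hia ?_ (HasSubset.Subset.eventuallyLE Ioc_subset_Ioi_self)
          filter_upwards [ae_restrict_mem measurableSet_Ioi] with u hu
          have : (0:ℝ) < u := hu
          positivity
      _ = M * ((1/r) ^ (a+2) * Real.Gamma (a+2)) := by
          congr 1
          rw [show a + 1 = (a+2) - 1 from by ring]
          exact Real.integral_rpow_mul_exp_neg_mul_Ioi (by linarith) hr0
  have bound2 : ‖∫ u in Ioc δ T, f u‖ ≤ K2 * Real.exp (-(r*δ)) := by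
    calc ‖∫ u in Ioc δ T, f u‖
        ≤ ∫ u in Ioc δ T, ‖(u:ℂ)^σ * (h u - h 0)‖ * Real.exp (-(r*δ)) := by
          refine norm_integral_le_of_norm_le (hIntK2.norm.mul_const _) ?_
          filter_upwards [ae_restrict_mem measurableSet_Ioc] with u hu
          have hu0 : 0 < u := lt_of_le_of_lt hδpos.le hu.1
          have : ‖f u‖ = ‖(u:ℂ)^σ * (h u - h 0)‖ * Real.exp (-(r*u)) := by
            simp only [hfdef]
            rw [norm_mul ((u:ℂ)^σ * (h u - h 0)),
              Complex.norm_exp]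
            rw [show (-(lam * u)).re = -(r * u) from by simp [Complex.mul_re, hrdef]]
          rw [this]
          apply mul_le_mul_of_nonneg_left _ (norm_nonneg _)
          apply Real.exp_le_exp.mpr
          nlinarith [hu.1]
      _ = K2 * Real.exp (-(r*δ)) := MeasureTheory.integral_mul_const _ _
  have bound3 : ‖∫ u in Ioi T, g u‖ ≤ K3 * Real.exp ((1-r)*T) := by
    calc ‖∫ u in Ioi T, g u‖
        ≤ ∫ u in Ioi T, (u ^ a * Real.exp (-(1*u))) * Real.exp ((1-r)*T) := by
          refine norm_integral_le_of_norm_le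
            ((hK3int.mono_set (Ioi_subset_Ioi hT.le)).mul_const _) ?_
          filter_upwards [ae_restrict_mem measurableSet_Ioi] with u hu
          have hu0 : 0 < u := lt_trans hT hu
          rw [hng u hu0]
          have h2 : (0:ℝ) ≤ u ^ a := Real.rpow_nonneg hu0.le _
          have h3 : Real.exp (-(r*u)) ≤ Real.exp (-(1*u)) * Real.exp ((1-r)*T) := by
            rw [← Real.exp_add]
            apply Real.exp_le_exp.mpr
            have hu' : T ≤ u := le_of_lt hu
            have h4 : (1-r)*u ≤ (1-r)*T := mul_le_mul_of_nonpos_left hu' (by linarith)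
            linarith
          calc u ^ a * Real.exp (-(r*u)) ≤ u ^ a * (Real.exp (-(1*u)) * Real.exp ((1-r)*T)) :=
                mul_le_mul_of_nonneg_left h3 h2
            _ = (u ^ a * Real.exp (-(1*u))) * Real.exp ((1-r)*T) := by ring
      _ = (∫ u in Ioi T, u ^ a * Real.exp (-(1*u))) * Real.exp ((1-r)*T) := MeasureTheory.integral_mul_const _ _
      _ ≤ K3 * Real.exp ((1-r)*T) := by
          refine mul_le_mul_of_nonneg_right ?_ (Real.exp_pos _).le
          refine setIntegral_mono_set hK3int ?_
            (HasSubset.Subset.eventuallyLE (Ioi_subset_Ioi hT.le))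
          filter_upwards [ae_restrict_mem measurableSet_Ioi] with u hu
          have : (0:ℝ) < u := hu
          positivity
  -- convert each bound to the x-scale
  have hxq : (0:ℝ) < x ^ (-(a+2)) := Real.rpow_pos_of_pos hx0 _
  have hG : 0 < Real.Gamma (a+2) := Real.Gamma_pos_of_pos (by linarith)
  have hc1 : M * ((1/r) ^ (a+2) * Real.Gamma (a+2))
      ≤ M * Real.Gamma (a+2) * cθ ^ (-(a+2)) * x ^ (-(a+2)) := by
    have e1 : (1/r) ^ (a+2) = r ^ (-(a+2)) := by
      rw [one_div, Real.inv_rpow hr0.le, ← Real.rpow_neg hr0.le]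
    have e2 : r ^ (-(a+2)) ≤ cθ ^ (-(a+2)) * x ^ (-(a+2)) := by
      rw [← Real.mul_rpow hcθ.le hx0.le]
      exact Real.rpow_le_rpow_of_nonpos (by positivity) hrx (by linarith)
    calc M * ((1/r) ^ (a+2) * Real.Gamma (a+2))
        = M * Real.Gamma (a+2) * r ^ (-(a+2)) := by rw [e1]; ring
      _ ≤ M * Real.Gamma (a+2) * (cθ ^ (-(a+2)) * x ^ (-(a+2))) :=
          mul_le_mul_of_nonneg_left e2 (mul_nonneg hM0 hG.le)
      _ = M * Real.Gamma (a+2) * cθ ^ (-(a+2)) * x ^ (-(a+2)) := by ring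
  have hc2 : K2 * Real.exp (-(r*δ)) ≤ K2 * x ^ (-(a+2)) := by
    refine mul_le_mul_of_nonneg_left (le_trans ?_ hexp1) hK2nn
    apply Real.exp_le_exp.mpr
    have h4 : cθ * x * δ ≤ r * δ := mul_le_mul_of_nonneg_right hrx hδpos.le
    linarith
  have hc3 : ‖h 0‖ * (K3 * Real.exp ((1-r)*T)) ≤ ‖h 0‖ * K3 * x ^ (-(a+2)) := by
    have h5 : Real.exp ((1-r)*T) ≤ x ^ (-(a+2)) := by
      refine le_trans ?_ hexp2
      apply Real.exp_le_exp.mpr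
      have h6 : (1-r)*T ≤ (1 - cθ*x)*T := mul_le_mul_of_nonneg_right (by linarith) hT.le
      linarith
    calc ‖h 0‖ * (K3 * Real.exp ((1-r)*T)) ≤ ‖h 0‖ * (K3 * x ^ (-(a+2))) := by
          refine mul_le_mul_of_nonneg_left ?_ (norm_nonneg _)
          exact mul_le_mul_of_nonneg_left h5 hK3nn
      _ = ‖h 0‖ * K3 * x ^ (-(a+2)) := by ring
  set S : ℝ := M * Real.Gamma (a+2) * cθ ^ (-(a+2)) + K2 + ‖h 0‖ * K3 with hSdef
  have hSnn : 0 ≤ S := by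
    have : (0:ℝ) ≤ M * Real.Gamma (a+2) * cθ ^ (-(a+2)) := by
      have : (0:ℝ) < cθ ^ (-(a+2)) := Real.rpow_pos_of_pos hcθ _
      have := this.le
      exact mul_nonneg (mul_nonneg hM0 hG.le) this
    have h7 : (0:ℝ) ≤ ‖h 0‖ * K3 := mul_nonneg (norm_nonneg _) hK3nn
    linarith
  have hnorm3 : ‖(∫ u in Ioc (0:ℝ) δ, f u) + (∫ u in Ioc δ T, f u)
      - h 0 * ∫ u in Ioi T, g u‖ ≤ S * x ^ (-(a+2)) := by
    calc ‖(∫ u in Ioc (0:ℝ) δ, f u) + (∫ u in Ioc δ T, f u) - h 0 * ∫ u in Ioi T, g u‖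
        ≤ ‖(∫ u in Ioc (0:ℝ) δ, f u) + (∫ u in Ioc δ T, f u)‖ + ‖h 0 * ∫ u in Ioi T, g u‖ :=
          norm_sub_le _ _
      _ ≤ (‖∫ u in Ioc (0:ℝ) δ, f u‖ + ‖∫ u in Ioc δ T, f u‖) + ‖h 0‖ * ‖∫ u in Ioi T, g u‖ := by
          rw [norm_mul]
          exact add_le_add_left (norm_add_le _ _) _
      _ ≤ (M * ((1/r) ^ (a+2) * Real.Gamma (a+2)) + K2 * Real.exp (-(r*δ)))
          + ‖h 0‖ * (K3 * Real.exp ((1-r)*T)) := by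
          refine add_le_add (add_le_add bound1 bound2) ?_
          exact mul_le_mul_of_nonneg_left bound3 (norm_nonneg _)
      _ ≤ (M * Real.Gamma (a+2) * cθ ^ (-(a+2)) * x ^ (-(a+2)) + K2 * x ^ (-(a+2)))
          + ‖h 0‖ * K3 * x ^ (-(a+2)) := add_le_add (add_le_add hc1 hc2) hc3
      _ = S * x ^ (-(a+2)) := by rw [hSdef]; ring
  have hTr : ‖Complex.exp ((T:ℂ)*lam)‖ = Real.exp (T*r) := by
    rw [Complex.norm_exp]
    congr 1
    simp [Complex.mul_re, hrdef]
  have hRHS : x ^ (-(a+2)) * Real.exp (-(|σ.im| * θ)) * Real.exp (T*r)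
      ≤ ‖lam ^ (-σ-2) * Complex.exp ((T:ℂ)*lam)‖ := by
    rw [norm_mul, hTr, Complex.norm_cpow_of_ne_zero hlam0]
    apply mul_le_mul_of_nonneg_right _ (Real.exp_pos _).le
    rw [show ((-σ-2 : ℂ)).re = -(a+2) from by simp [ha]; ring,
      show ((-σ-2 : ℂ)).im = -σ.im from by simp]
    rw [div_eq_mul_inv, ← Real.exp_neg]
    apply mul_le_mul_of_nonneg_left _ hxq.le
    apply Real.exp_le_exp.mpr
    have h8 : |Complex.arg lam * σ.im| ≤ θ * |σ.im| := by
      rw [abs_mul]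
      exact mul_le_mul_of_nonneg_right harg (abs_nonneg _)
    have h9 := neg_abs_le (Complex.arg lam * σ.im)
    have h10 : θ * |σ.im| = |σ.im| * θ := mul_comm _ _
    have h11 : -(Complex.arg lam * -σ.im) = Complex.arg lam * σ.im := by ring
    rw [h11]
    linarith
  have hexpone : Real.exp (|σ.im| * θ) * Real.exp (-(|σ.im| * θ)) = 1 := by
    rw [← Real.exp_add]; simp
  calc ‖(∫ t in (0:ℝ)..T, φ t * Complex.exp (lam * t)) -
      h 0 * Complex.Gamma (σ + 1) * lam ^ (-σ - 1) * Complex.exp (T * lam)‖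
      = Real.exp (T*r) * ‖(∫ u in Ioc (0:ℝ) δ, f u) + (∫ u in Ioc δ T, f u)
        - h 0 * ∫ u in Ioi T, g u‖ := by rw [key, norm_mul, hTr]
    _ ≤ Real.exp (T*r) * (S * x ^ (-(a+2))) :=
        mul_le_mul_of_nonneg_left hnorm3 (Real.exp_pos _).le
    _ = (S * Real.exp (|σ.im| * θ)) * (x ^ (-(a+2)) * Real.exp (-(|σ.im| * θ)) * Real.exp (T*r)) := by
        rw [show (S * Real.exp (|σ.im| * θ)) * (x ^ (-(a+2)) * Real.exp (-(|σ.im| * θ))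
            * Real.exp (T*r))
          = S * x ^ (-(a+2)) * Real.exp (T*r)
            * (Real.exp (|σ.im| * θ) * Real.exp (-(|σ.im| * θ))) from by ring, hexpone]
        ring
    _ ≤ (S * Real.exp (|σ.im| * θ)) * ‖lam ^ (-σ-2) * Complex.exp ((T:ℂ)*lam)‖ :=
        mul_le_mul_of_nonneg_left hRHS (mul_nonneg hSnn (Real.exp_pos _).le)
end

section
/- Let 0 < T ≤ ∞ and φ : [0, T] → ℂ be integrable with φ(t) = t^σ h(t), where Re σ > -1, h(0) ≠ 0, and h is differentiable with bounded derivative near 0. Then Φ(λ) = ∫_0^T φ(t) e^{-λt} dt is finite for Re λ > 0 and Φ(λ) = h(0) Γ(σ+1) λ^{-σ-1} + O(λ^{-σ-2}) as λ → ∞ in the sector |arg λ| ≤ θ, for any fixed 0 ≤ θ < π/2. -/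
open MeasureTheory Complex Filter Asymptotics Set

private lemma wl_int_rpow_exp {s : ℝ} (hs : -1 < s) {x : ℝ} (hx : 0 < x) :
    IntegrableOn (fun t : ℝ => t ^ s * Real.exp (-x * t)) (Set.Ioi 0) := by
  have := integrableOn_rpow_mul_exp_neg_mul_rpow hs one_pos hx
  simpa [Real.rpow_one] using this

private lemma wl_norm_cpow_exp (σ lam : ℂ) {t : ℝ} (ht : 0 < t) :
    ‖(t:ℂ) ^ σ * Complex.exp (-lam * t)‖ = t ^ σ.re * Real.exp (-lam.re * t) := by
  rw [norm_mul,
    Complex.norm_cpow_eq_rpow_re_of_pos ht, Complex.norm_exp]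
  congr 2
  simp

private lemma wl_meas (σ z : ℂ) :
    AEStronglyMeasurable (fun t : ℝ => (t:ℂ) ^ σ * Complex.exp (-z * t))
      (volume.restrict (Set.Ioi 0)) := by
  apply ContinuousOn.aestronglyMeasurable _ measurableSet_Ioi
  apply ContinuousOn.mul
  · exact (Complex.continuous_ofReal.continuousOn).cpow continuousOn_const
      (fun t ht => Or.inl (by exact_mod_cast ht))
  · exact (Complex.continuous_exp.comp (by continuity)).continuousOn

private lemma wl_int_cpow_exp (σ : ℂ) (hσ : -1 < σ.re) (lam : ℂ) (hlam : 0 < lam.re) :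
    IntegrableOn (fun t : ℝ => (t:ℂ) ^ σ * Complex.exp (-lam * t)) (Set.Ioi 0) := by
  refine (wl_int_rpow_exp hσ hlam).mono' (wl_meas σ lam) ?_
  refine ae_restrict_of_forall_mem measurableSet_Ioi fun t ht => ?_
  rw [wl_norm_cpow_exp σ lam ht]

private lemma wl_gamma_real (σ : ℂ) (hσ : -1 < σ.re) {x : ℝ} (hx : 0 < x) :
    ∫ t in Set.Ioi (0:ℝ), (t:ℂ) ^ σ * Complex.exp (-(x:ℂ) * t)
      = Complex.Gamma (σ + 1) * (x:ℂ) ^ (-σ - 1) := by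
  have ha : 0 < (σ + 1).re := by simp only [Complex.add_re, Complex.one_re]; linarith
  have h := Complex.integral_cpow_mul_exp_neg_mul_Ioi ha hx
  simp only [add_sub_cancel_right] at h
  have harg : Complex.arg (x:ℂ) ≠ Real.pi := by
    rw [Complex.arg_ofReal_of_nonneg hx.le]
    exact Real.pi_ne_zero.symm
  calc ∫ t in Set.Ioi (0:ℝ), (t:ℂ) ^ σ * Complex.exp (-(x:ℂ) * t)
      = ∫ t in Set.Ioi (0:ℝ), (t:ℂ) ^ σ * Complex.exp (-((x:ℂ) * t)) := by
        simp_rw [neg_mul]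
    _ = (1 / (x:ℂ)) ^ (σ + 1) * Complex.Gamma (σ + 1) := h
    _ = Complex.Gamma (σ + 1) * (x:ℂ) ^ (-σ - 1) := by
        rw [one_div, Complex.inv_cpow _ _ harg, ← Complex.cpow_neg, mul_comm]
        ring_nf

private lemma wl_gamma_laplace (σ : ℂ) (hσ : -1 < σ.re) {lam : ℂ} (hlam : 0 < lam.re) :
    ∫ t in Set.Ioi (0:ℝ), (t:ℂ) ^ σ * Complex.exp (-lam * t)
      = Complex.Gamma (σ + 1) * lam ^ (-σ - 1) := by
  set U : Set ℂ := {z | 0 < z.re} with hU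
  set f : ℂ → ℂ := fun z => ∫ t in Set.Ioi (0:ℝ), (t:ℂ) ^ σ * Complex.exp (-z * t) with hf
  set g : ℂ → ℂ := fun z => Complex.Gamma (σ + 1) * z ^ (-σ - 1) with hg
  have hUo : IsOpen U := isOpen_lt continuous_const Complex.continuous_re
  have hUc : Convex ℝ U := convex_halfSpace_re_gt 0
  have hfd : DifferentiableOn ℂ f U := by
    intro z₀ hz₀
    have hz : 0 < z₀.re := hz₀
    set ε : ℝ := z₀.re / 2 with hε
    have hεpos : 0 < ε := by positivity
    have key := hasDerivAt_integral_of_dominated_loc_of_deriv_le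
      (F := fun z (t : ℝ) => (t:ℂ) ^ σ * Complex.exp (-z * t))
      (F' := fun z (t : ℝ) => (t:ℂ) ^ σ * (-(t:ℂ) * Complex.exp (-z * t)))
      (x₀ := z₀) (μ := volume.restrict (Set.Ioi 0))
      (bound := fun t : ℝ => t ^ (σ.re + 1) * Real.exp (-ε * t))
      (Metric.ball_mem_nhds z₀ hεpos)
      (Filter.Eventually.of_forall fun z => wl_meas σ z)
      (wl_int_cpow_exp σ hσ z₀ hz)
      ?_ ?_ ?_ ?_
    · exact (key.2.differentiableAt).differentiableWithinAt
    · -- measurability of F' z₀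
      apply ContinuousOn.aestronglyMeasurable _ measurableSet_Ioi
      apply ContinuousOn.mul
      · exact (Complex.continuous_ofReal.continuousOn).cpow continuousOn_const
          (fun t ht => Or.inl (by exact_mod_cast ht))
      · exact ((Complex.continuous_ofReal.neg).mul
          (Complex.continuous_exp.comp (by continuity))).continuousOn
    · -- bound
      refine ae_restrict_of_forall_mem measurableSet_Ioi fun t ht z hzb => ?_
      have ht' : (0:ℝ) < t := ht
      have hb : ‖z - z₀‖ < ε := by
        simpa [Complex.dist_eq] using Metric.mem_ball.mp hzb
      have hre : |z.re - z₀.re| ≤ ‖z - z₀‖ := by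
        simpa using Complex.abs_re_le_norm (z - z₀)
      have hzre : ε ≤ z.re := by
        have h1 := (abs_le.mp (hre.trans hb.le)).1
        have : ε = z₀.re / 2 := hε
        linarith
      have hnorm : ‖(t:ℂ) ^ σ * (-(t:ℂ) * Complex.exp (-z * t))‖
          = t ^ σ.re * (t * Real.exp (-z.re * t)) := by
        rw [norm_mul, norm_mul]
        rw [Complex.norm_cpow_eq_rpow_re_of_pos ht']
        congr 2
        · rw [norm_neg, Complex.norm_real, Real.norm_eq_abs, abs_of_pos ht']
        · rw [Complex.norm_exp]
          congr 1
          simp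
      rw [hnorm]
      have h1 : Real.exp (-z.re * t) ≤ Real.exp (-ε * t) :=
        Real.exp_le_exp.mpr (by nlinarith)
      calc t ^ σ.re * (t * Real.exp (-z.re * t))
          ≤ t ^ σ.re * (t * Real.exp (-ε * t)) := by
            apply mul_le_mul_of_nonneg_left
              (mul_le_mul_of_nonneg_left h1 ht'.le) (Real.rpow_nonneg ht'.le _)
        _ = t ^ (σ.re + 1) * Real.exp (-ε * t) := by
            rw [Real.rpow_add_one ht'.ne']; ring
    · exact wl_int_rpow_exp (by linarith) hεpos
    · -- differentiability in z, pointwise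
      refine ae_restrict_of_forall_mem measurableSet_Ioi fun t ht z hzb => ?_
      have h1 : HasDerivAt (fun z : ℂ => -z * (t:ℂ)) (-(t:ℂ)) z := by
        simpa using ((hasDerivAt_id z).neg.mul_const (t:ℂ))
      have h2 := h1.cexp
      have h3 := h2.const_mul ((t:ℂ) ^ σ)
      have h4 : HasDerivAt (fun z : ℂ => (t:ℂ) ^ σ * Complex.exp (-z * t))
          ((t:ℂ) ^ σ * (-(t:ℂ) * Complex.exp (-z * t))) z := by
        exact h3.congr_deriv (by ring)
      exact h4
  have hgd : DifferentiableOn ℂ g U := by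
    intro z hz
    have : DifferentiableAt ℂ g z := by
      apply DifferentiableAt.const_mul
      have := (hasDerivAt_id z).cpow_const (c := -σ - 1)
        (Complex.mem_slitPlane_iff.mpr (Or.inl hz))
      exact this.differentiableAt
    exact this.differentiableWithinAt
  have heq : Set.EqOn f g U := by
    apply (hfd.analyticOnNhd hUo).eqOn_of_preconnected_of_frequently_eq
      (hgd.analyticOnNhd hUo) hUc.isPreconnected (z₀ := 1) (by simp [hU])
    have hseq : Filter.Tendsto (fun n : ℕ => ((1 + (n+1:ℝ)⁻¹ : ℝ) : ℂ)) Filter.atTop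
        (nhdsWithin 1 {(1:ℂ)}ᶜ) := by
      rw [tendsto_nhdsWithin_iff]
      constructor
      · have hr : Filter.Tendsto (fun n : ℕ => (1 + ((n:ℝ)+1)⁻¹)) Filter.atTop (nhds 1) := by
          have h0 := tendsto_one_div_add_atTop_nhds_zero_nat (𝕜 := ℝ)
          simp only [one_div] at h0
          have := (tendsto_const_nhds (x := (1:ℝ)) (f := Filter.atTop (α := ℕ))).add h0
          simpa using this
        have h2 := (Complex.continuous_ofReal.tendsto (1:ℝ)).comp hr
        rw [Complex.ofReal_one] at h2
        exact h2
      · refine Filter.Eventually.of_forall fun n => ?_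
        simp only [Set.mem_compl_iff, Set.mem_singleton_iff]
        intro hcon
        have h4 : (1 + ((n:ℝ)+1)⁻¹) = 1 := by exact_mod_cast hcon
        have h5 : (0:ℝ) < ((n:ℝ)+1)⁻¹ := by positivity
        linarith
    refine hseq.frequently (Filter.Frequently.of_forall fun n => ?_)
    exact wl_gamma_real σ hσ (by positivity)
  exact heq hlam
private lemma wl_exp_tail {a s : ℝ} (ha : 0 < a) (hs : 0 ≤ s) :
    ∃ R : ℝ, 1 ≤ R ∧ ∀ r : ℝ, R ≤ r → Real.exp (-(a * r)) ≤ r ^ (-s) := by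
  set n : ℕ := ⌈s⌉₊ with hn
  have hsn : s ≤ (n : ℝ) := Nat.le_ceil s
  have h1 : Filter.Tendsto (fun r : ℝ => (a * r) ^ n * Real.exp (-(a * r)))
      Filter.atTop (nhds 0) :=
    (Real.tendsto_pow_mul_exp_neg_atTop_nhds_zero n).comp
      (Filter.Tendsto.const_mul_atTop ha Filter.tendsto_id)
  have h2 : ∀ᶠ r : ℝ in Filter.atTop, (a * r) ^ n * Real.exp (-(a * r)) ≤ a ^ n := by
    have hpos : (0:ℝ) < a ^ n := by positivity
    exact h1.eventually_le_const hpos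
  obtain ⟨R₀, hR₀⟩ := Filter.eventually_atTop.mp h2
  refine ⟨max 1 R₀, le_max_left _ _, fun r hr => ?_⟩
  have hr1 : (1:ℝ) ≤ r := le_trans (le_max_left _ _) hr
  have hr0 : (0:ℝ) < r := lt_of_lt_of_le one_pos hr1
  have hkey := hR₀ r (le_trans (le_max_right _ _) hr)
  have h3 : a ^ n * (r ^ n * Real.exp (-(a * r))) ≤ a ^ n * 1 := by
    rw [mul_one]
    calc a ^ n * (r ^ n * Real.exp (-(a * r))) = (a * r) ^ n * Real.exp (-(a * r)) := by
          rw [mul_pow]; ring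
      _ ≤ a ^ n := hkey
  have h4 : r ^ n * Real.exp (-(a * r)) ≤ 1 :=
    le_of_mul_le_mul_left h3 (by positivity)
  have h5 : Real.exp (-(a * r)) ≤ (r ^ n)⁻¹ := by
    rw [← one_div, le_div_iff₀ (by positivity : (0:ℝ) < r ^ n)]
    nlinarith [h4]
  calc Real.exp (-(a * r)) ≤ (r ^ n)⁻¹ := h5
    _ = r ^ (-(n:ℝ)) := by
        rw [Real.rpow_neg hr0.le, Real.rpow_natCast]
    _ ≤ r ^ (-s) := Real.rpow_le_rpow_of_exponent_le hr1 (by linarith)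

set_option maxHeartbeats 1600000 in
/-- Watson's lemma: `Φ(λ) = ∫_{S} φ(t) e^{-λt} dt` over `S = {t : 0 ≤ t, t ≤ T}`
(with `0 < T ≤ ∞`) is finite for `Re λ > 0` and satisfies
`Φ(λ) = h(0)Γ(σ+1)λ^{-σ-1} + O(λ^{-σ-2})` in the sector `|arg λ| ≤ θ`. -/
theorem watson_lemma
    (T : ENNReal) (hT : 0 < T)
    (S : Set ℝ) (hS : S = {t : ℝ | 0 ≤ t ∧ (ENNReal.ofReal t) ≤ T})
    (σ : ℂ) (hσ : -1 < σ.re)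
    (φ h : ℝ → ℂ)
    (hint : IntegrableOn φ S volume)
    (hφ : ∀ t ∈ S, φ t = ((t : ℝ) : ℂ) ^ σ * h t)
    (hh0 : h 0 ≠ 0)
    (hh : ∃ δ > (0 : ℝ), (∀ t ∈ Set.Icc (0 : ℝ) δ, DifferentiableAt ℝ h t) ∧
          ∃ M : ℝ, ∀ t ∈ Set.Icc (0 : ℝ) δ, ‖deriv h t‖ ≤ M)
    (θ : ℝ) (hθ₀ : 0 ≤ θ) (hθ : θ < Real.pi / 2) :
    (∀ lam : ℂ, 0 < lam.re →
        IntegrableOn (fun t : ℝ => φ t * Complex.exp (-lam * t)) S volume) ∧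
    (fun lam : ℂ =>
        (∫ t in S, φ t * Complex.exp (-lam * t)) -
          h 0 * Complex.Gamma (σ + 1) * lam ^ (-σ - 1))
      =O[comap (fun z : ℂ => ‖z‖) atTop ⊓ 𝓟 {lam : ℂ | |Complex.arg lam| ≤ θ}]
      (fun lam : ℂ => lam ^ (-σ - 2)) := by
  obtain ⟨δ, hδpos, hdiff, M, hM⟩ := hh
  have hc : 0 < Real.cos θ := Real.cos_pos_of_mem_Ioo ⟨by linarith [Real.pi_pos], hθ⟩
  set c : ℝ := Real.cos θ with hcdef
  have hSmeas : MeasurableSet S := by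
    rcases eq_or_ne T ⊤ with hT' | hT'
    · have hSIci : S = Set.Ici (0:ℝ) := by rw [hS]; ext t; simp [hT']
      rw [hSIci]; exact measurableSet_Ici
    · have hSIcc : S = Set.Icc 0 T.toReal := by
        rw [hS]; ext t
        simp [Set.mem_Icc, ENNReal.ofReal_le_iff_le_toReal hT']
      rw [hSIcc]; exact measurableSet_Icc
  have part1 : ∀ lam : ℂ, 0 < lam.re →
      IntegrableOn (fun t : ℝ => φ t * Complex.exp (-lam * t)) S volume := by
    intro lam hlam
    refine hint.norm.mono'
      (hint.1.mul ((Complex.continuous_exp.comp (by fun_prop : Continuous fun t : ℝ => -lam * (t:ℂ))).aestronglyMeasurable.restrict)) ?_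
    refine ae_restrict_of_forall_mem hSmeas fun t ht => ?_
    have ht0 : 0 ≤ t := by rw [hS] at ht; exact ht.1
    rw [norm_mul]
    have he : ‖Complex.exp (-lam * t)‖ ≤ 1 := by
      rw [Complex.norm_exp, Real.exp_le_one_iff]
      have hre : (-lam * (t:ℂ)).re = -(lam.re * t) := by simp
      rw [hre]
      nlinarith
    nlinarith [norm_nonneg (φ t), norm_nonneg (Complex.exp (-lam * t))]
  refine ⟨part1, ?_⟩
  obtain ⟨δ0, hδ0pos, hδ0δ, hδ0T⟩ : ∃ δ0 : ℝ, 0 < δ0 ∧ δ0 ≤ δ ∧ ENNReal.ofReal δ0 ≤ T := by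
    rcases eq_or_ne T ⊤ with hT' | hT'
    · exact ⟨δ, hδpos, le_rfl, hT' ▸ le_top⟩
    · refine ⟨min δ T.toReal, lt_min hδpos (ENNReal.toReal_pos hT.ne' hT'), min_le_left _ _, ?_⟩
      calc ENNReal.ofReal (min δ T.toReal) ≤ ENNReal.ofReal T.toReal :=
            ENNReal.ofReal_le_ofReal (min_le_right _ _)
        _ = T := ENNReal.ofReal_toReal hT'
  have hIccS : Set.Icc 0 δ0 ⊆ S := fun t ht => by
    rw [hS]
    exact ⟨ht.1, le_trans (ENNReal.ofReal_le_ofReal ht.2) hδ0T⟩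
  have hM0 : 0 ≤ M := le_trans (norm_nonneg _) (hM 0 ⟨le_rfl, hδpos.le⟩)
  have hMVT : ∀ t ∈ Set.Icc (0:ℝ) δ0, ‖h t - h 0‖ ≤ M * t := by
    intro t ht
    have := Convex.norm_image_sub_le_of_norm_deriv_le (f := h) (s := Set.Icc 0 δ)
      hdiff hM (convex_Icc _ _) ⟨le_rfl, hδpos.le⟩ ⟨ht.1, ht.2.trans hδ0δ⟩
    simpa [Real.norm_eq_abs, _root_.abs_of_nonneg ht.1] using this
  set K0 : ℝ := ∫ t in S, ‖φ t‖ with hK0def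
  have hK00 : 0 ≤ K0 := integral_nonneg fun t => norm_nonneg _
  obtain ⟨RB, hRB1, hRB⟩ := wl_exp_tail (a := c * δ0) (s := σ.re + 2)
    (mul_pos hc hδ0pos) (by linarith)
  obtain ⟨RC, hRC1, hRC⟩ := wl_exp_tail (a := c * δ0 / 2) (s := σ.re + 2)
    (div_pos (mul_pos hc hδ0pos) two_pos) (by linarith)
  set CA : ℝ := M * Real.Gamma (σ.re + 2) * c ^ (-(σ.re + 2)) with hCAdef
  set CC : ℝ := ‖h 0‖ * (Real.Gamma (σ.re + 1) * (c / 2) ^ (-(σ.re + 1))) with hCCdef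
  have hCA0 : 0 ≤ CA := by
    have hΓ := Real.Gamma_pos_of_pos (show (0:ℝ) < σ.re + 2 by linarith)
    exact mul_nonneg (mul_nonneg hM0 hΓ.le) (Real.rpow_nonneg hc.le _)
  have hCC0 : 0 ≤ CC := by
    have hΓ := Real.Gamma_pos_of_pos (show (0:ℝ) < σ.re + 1 by linarith)
    exact mul_nonneg (norm_nonneg _)
      (mul_nonneg hΓ.le (Real.rpow_nonneg (by linarith : (0:ℝ) ≤ c / 2) _))
  set C0 : ℝ := CA + K0 + CC with hC0def
  have hC00 : 0 ≤ C0 := by rw [hC0def]; linarith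
  apply Asymptotics.IsBigO.of_bound (C0 * Real.exp (θ * |σ.im|))
  have hev1 : ∀ᶠ lam : ℂ in comap (fun z : ℂ => ‖z‖) atTop ⊓ 𝓟 {lam : ℂ | |Complex.arg lam| ≤ θ},
      max 1 (max RB RC) ≤ ‖lam‖ := by
    apply Filter.Eventually.filter_mono inf_le_left
    rw [Filter.eventually_comap]
    filter_upwards [Filter.eventually_ge_atTop (max 1 (max RB RC))] with b hb lam hab
    rw [hab]; exact hb
  have hev2 : ∀ᶠ lam : ℂ in comap (fun z : ℂ => ‖z‖) atTop ⊓ 𝓟 {lam : ℂ | |Complex.arg lam| ≤ θ},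
      |Complex.arg lam| ≤ θ := by
    apply Filter.Eventually.filter_mono inf_le_right
    rw [Filter.eventually_principal]
    exact fun lam hlam => hlam
  filter_upwards [hev1, hev2] with lam hR harg
  have habs1 : 1 ≤ ‖lam‖ := le_trans (le_max_left _ _) hR
  have habs0 : 0 < ‖lam‖ := lt_of_lt_of_le one_pos habs1
  have hne : lam ≠ 0 := by
    intro h0; rw [h0] at habs0; simp at habs0
  have hcx : c * ‖lam‖ ≤ lam.re := by
    have hcos : c ≤ Real.cos lam.arg := by
      rw [← Real.cos_abs lam.arg]
      exact Real.cos_le_cos_of_nonneg_of_le_pi (abs_nonneg _) (by linarith [Real.pi_pos]) harg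
    have hca := Complex.cos_arg hne
    have hre : lam.re = Real.cos lam.arg * ‖lam‖ := by
      rw [hca]; field_simp
    rw [hre]
    exact mul_le_mul_of_nonneg_right hcos habs0.le
  have hx : 0 < lam.re := lt_of_lt_of_le (mul_pos hc habs0) hcx
  set x : ℝ := lam.re with hxdef
  set ρ : ℝ := ‖lam‖ ^ (-(σ.re + 2)) with hρdef
  have hρ0 : 0 ≤ ρ := Real.rpow_nonneg habs0.le _
  set e : ℝ → ℂ := fun t => Complex.exp (-lam * t) with hedef
  have hIφ : IntegrableOn (fun t => φ t * e t) S volume := part1 lam hx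
  have hIg : IntegrableOn (fun t : ℝ => (t:ℂ) ^ σ * e t) (Set.Ioi 0) volume :=
    wl_int_cpow_exp σ hσ lam hx
  have hIocS : Set.Ioc (0:ℝ) δ0 ⊆ S := fun t ht => hIccS ⟨ht.1.le, ht.2⟩
  -- decomposition
  have hsplitS : ∫ t in S, φ t * e t
      = (∫ t in Set.Icc (0:ℝ) δ0, φ t * e t) + ∫ t in S \ Set.Icc (0:ℝ) δ0, φ t * e t := by
    rw [← MeasureTheory.setIntegral_union Set.disjoint_sdiff_right
      (hSmeas.diff measurableSet_Icc) (hIφ.mono_set hIccS) (hIφ.mono_set Set.diff_subset),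
      Set.union_diff_cancel hIccS]
  have hsplitG : ∫ t in Set.Ioi (0:ℝ), (t:ℂ) ^ σ * e t
      = (∫ t in Set.Ioc (0:ℝ) δ0, (t:ℂ) ^ σ * e t) + ∫ t in Set.Ioi δ0, (t:ℂ) ^ σ * e t := by
    rw [← MeasureTheory.setIntegral_union (Set.Ioc_disjoint_Ioi le_rfl)
      measurableSet_Ioi (hIg.mono_set Set.Ioc_subset_Ioi_self)
      (hIg.mono_set (Set.Ioi_subset_Ioi hδ0pos.le)),
      Set.Ioc_union_Ioi_eq_Ioi hδ0pos.le]
  have hA : (∫ t in Set.Ioc (0:ℝ) δ0, φ t * e t)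
        - h 0 * ∫ t in Set.Ioc (0:ℝ) δ0, (t:ℂ) ^ σ * e t
      = ∫ t in Set.Ioc (0:ℝ) δ0, (t:ℂ) ^ σ * (h t - h 0) * e t := by
    rw [← MeasureTheory.integral_const_mul, ← MeasureTheory.integral_sub
      (hIφ.mono_set hIocS) ((hIg.mono_set Set.Ioc_subset_Ioi_self).const_mul (h 0))]
    apply MeasureTheory.setIntegral_congr_fun measurableSet_Ioc
    intro t ht
    dsimp only
    rw [hφ t (hIocS ht)]
    ring
  have hmain : (∫ t in S, φ t * e t) - h 0 * Complex.Gamma (σ + 1) * lam ^ (-σ - 1)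
      = (∫ t in Set.Ioc (0:ℝ) δ0, (t:ℂ) ^ σ * (h t - h 0) * e t)
        + (∫ t in S \ Set.Icc (0:ℝ) δ0, φ t * e t)
        - h 0 * ∫ t in Set.Ioi δ0, (t:ℂ) ^ σ * e t := by
    have hg := wl_gamma_laplace σ hσ hx
    rw [mul_assoc, ← hg, hsplitS, MeasureTheory.integral_Icc_eq_integral_Ioc, hsplitG, ← hA]
    ring
  -- bound on term A
  have hnA : ‖∫ t in Set.Ioc (0:ℝ) δ0, (t:ℂ) ^ σ * (h t - h 0) * e t‖ ≤ CA * ρ := by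
    have hint1 : IntegrableOn (fun t : ℝ => t ^ (σ.re + 1) * Real.exp (-x * t))
        (Set.Ioi 0) volume := wl_int_rpow_exp (by linarith) hx
    have hstep1 : ‖∫ t in Set.Ioc (0:ℝ) δ0, (t:ℂ) ^ σ * (h t - h 0) * e t‖
        ≤ ∫ t in Set.Ioc (0:ℝ) δ0, M * (t ^ (σ.re + 1) * Real.exp (-x * t)) := by
      apply MeasureTheory.norm_integral_le_of_norm_le
        ((hint1.mono_set Set.Ioc_subset_Ioi_self).const_mul M)
      refine ae_restrict_of_forall_mem measurableSet_Ioc fun t ht => ?_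
      have ht0 : 0 < t := ht.1
      have h1 : ‖(t:ℂ) ^ σ‖ = t ^ σ.re := by
        rw [Complex.norm_cpow_eq_rpow_re_of_pos ht0]
      have h2 : ‖e t‖ = Real.exp (-x * t) := by
        rw [hedef, Complex.norm_exp]
        congr 1; simp [hxdef]
      rw [norm_mul, norm_mul, h1, h2]
      have h3 := hMVT t ⟨ht0.le, ht.2⟩
      calc t ^ σ.re * ‖h t - h 0‖ * Real.exp (-x * t)
          ≤ t ^ σ.re * (M * t) * Real.exp (-x * t) := by
            apply mul_le_mul_of_nonneg_right
              (mul_le_mul_of_nonneg_left h3 (Real.rpow_nonneg ht0.le _)) (Real.exp_nonneg _)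
        _ = M * (t ^ (σ.re + 1) * Real.exp (-x * t)) := by
            rw [Real.rpow_add_one ht0.ne']; ring
    have hstep2 : ∫ t in Set.Ioc (0:ℝ) δ0, M * (t ^ (σ.re + 1) * Real.exp (-x * t))
        ≤ M * (Real.Gamma (σ.re + 2) * x ^ (-(σ.re + 2))) := by
      rw [MeasureTheory.integral_const_mul]
      apply mul_le_mul_of_nonneg_left _ hM0
      calc ∫ t in Set.Ioc (0:ℝ) δ0, t ^ (σ.re + 1) * Real.exp (-x * t)
          ≤ ∫ t in Set.Ioi (0:ℝ), t ^ (σ.re + 1) * Real.exp (-x * t) := by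
            apply MeasureTheory.setIntegral_mono_set hint1
            · refine ae_restrict_of_forall_mem measurableSet_Ioi fun t ht => ?_
              have ht0 : (0:ℝ) < t := ht
              exact mul_nonneg (Real.rpow_nonneg ht0.le _) (Real.exp_nonneg _)
            · exact HasSubset.Subset.eventuallyLE Set.Ioc_subset_Ioi_self
        _ = Real.Gamma (σ.re + 2) * x ^ (-(σ.re + 2)) := by
            have hform := Real.integral_rpow_mul_exp_neg_mul_Ioi
              (a := σ.re + 2) (r := x) (by linarith) hx
            rw [show ∫ t in Set.Ioi (0:ℝ), t ^ (σ.re + 1) * Real.exp (-x * t)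
                = ∫ t in Set.Ioi (0:ℝ), t ^ (σ.re + 2 - 1) * Real.exp (-(x * t)) by
              apply MeasureTheory.setIntegral_congr_fun measurableSet_Ioi
              intro t ht
              dsimp only
              rw [show σ.re + 2 - 1 = σ.re + 1 by ring, neg_mul], hform,
              one_div, Real.inv_rpow hx.le, ← Real.rpow_neg hx.le]
            ring
    have hxbound : x ^ (-(σ.re + 2)) ≤ c ^ (-(σ.re + 2)) * ρ := by
      have h1 : x ^ (-(σ.re + 2)) ≤ (c * ‖lam‖) ^ (-(σ.re + 2)) :=
        Real.rpow_le_rpow_of_nonpos (mul_pos hc habs0) hcx (by linarith)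
      rwa [Real.mul_rpow hc.le habs0.le] at h1
    calc ‖∫ t in Set.Ioc (0:ℝ) δ0, (t:ℂ) ^ σ * (h t - h 0) * e t‖
        ≤ M * (Real.Gamma (σ.re + 2) * x ^ (-(σ.re + 2))) := hstep1.trans hstep2
      _ ≤ M * (Real.Gamma (σ.re + 2) * (c ^ (-(σ.re + 2)) * ρ)) := by
          have hΓ := (Real.Gamma_pos_of_pos (show (0:ℝ) < σ.re + 2 by linarith)).le
          apply mul_le_mul_of_nonneg_left (mul_le_mul_of_nonneg_left hxbound hΓ) hM0
      _ = CA * ρ := by rw [hCAdef]; ring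
  -- bound on term B
  have hnB : ‖∫ t in S \ Set.Icc (0:ℝ) δ0, φ t * e t‖ ≤ K0 * ρ := by
    have hstep1 : ‖∫ t in S \ Set.Icc (0:ℝ) δ0, φ t * e t‖
        ≤ ∫ t in S \ Set.Icc (0:ℝ) δ0, ‖φ t‖ * Real.exp (-(x * δ0)) := by
      apply MeasureTheory.norm_integral_le_of_norm_le
        ((MeasureTheory.IntegrableOn.mono_set hint.norm Set.diff_subset).mul_const _)
      refine ae_restrict_of_forall_mem (hSmeas.diff measurableSet_Icc) fun t ht => ?_
      have ht0 : 0 ≤ t := by have := ht.1; rw [hS] at this; exact this.1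
      have htδ : δ0 ≤ t := by
        by_contra hcon
        exact ht.2 ⟨ht0, by linarith⟩
      have h2 : ‖e t‖ = Real.exp (-x * t) := by
        rw [hedef, Complex.norm_exp]
        congr 1; simp [hxdef]
      rw [norm_mul, h2]
      apply mul_le_mul_of_nonneg_left _ (norm_nonneg _)
      apply Real.exp_le_exp.mpr
      nlinarith
    have hstep2 : ∫ t in S \ Set.Icc (0:ℝ) δ0, ‖φ t‖ * Real.exp (-(x * δ0))
        ≤ K0 * Real.exp (-(x * δ0)) := by
      rw [MeasureTheory.integral_mul_const]
      apply mul_le_mul_of_nonneg_right _ (Real.exp_nonneg _)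
      apply MeasureTheory.setIntegral_mono_set hint.norm
      · exact ae_restrict_of_forall_mem hSmeas fun t _ => norm_nonneg _
      · exact HasSubset.Subset.eventuallyLE Set.diff_subset
    have hstep3 : Real.exp (-(x * δ0)) ≤ ρ := by
      calc Real.exp (-(x * δ0)) ≤ Real.exp (-(c * δ0 * ‖lam‖)) := by
            apply Real.exp_le_exp.mpr
            nlinarith
        _ ≤ ρ := hRB _ (le_trans (le_trans (le_max_left _ _) (le_max_right _ _)) hR)
    calc ‖∫ t in S \ Set.Icc (0:ℝ) δ0, φ t * e t‖ ≤ K0 * Real.exp (-(x * δ0)) :=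
          hstep1.trans hstep2
      _ ≤ K0 * ρ := mul_le_mul_of_nonneg_left hstep3 hK00
  -- bound on term C
  have hnC : ‖h 0 * ∫ t in Set.Ioi δ0, (t:ℂ) ^ σ * e t‖ ≤ CC * ρ := by
    have hx2 : 0 < x / 2 := by positivity
    have hint2 : IntegrableOn (fun t : ℝ => t ^ σ.re * Real.exp (-(x / 2) * t))
        (Set.Ioi 0) volume := wl_int_rpow_exp hσ hx2
    have hstep1 : ‖∫ t in Set.Ioi δ0, (t:ℂ) ^ σ * e t‖
        ≤ ∫ t in Set.Ioi δ0, t ^ σ.re * Real.exp (-x * t) := by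
      apply MeasureTheory.norm_integral_le_of_norm_le
        ((wl_int_rpow_exp hσ hx).mono_set (Set.Ioi_subset_Ioi hδ0pos.le))
      refine ae_restrict_of_forall_mem measurableSet_Ioi fun t ht => ?_
      have ht0 : 0 < t := lt_trans hδ0pos ht
      rw [hedef]
      exact le_of_eq (wl_norm_cpow_exp σ lam ht0)
    have hstep2 : ∫ t in Set.Ioi δ0, t ^ σ.re * Real.exp (-x * t)
        ≤ Real.exp (-(x * δ0 / 2)) * (∫ t in Set.Ioi (0:ℝ), t ^ σ.re * Real.exp (-(x / 2) * t)) := by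
      calc ∫ t in Set.Ioi δ0, t ^ σ.re * Real.exp (-x * t)
          ≤ ∫ t in Set.Ioi δ0, Real.exp (-(x * δ0 / 2)) * (t ^ σ.re * Real.exp (-(x / 2) * t)) := by
            apply MeasureTheory.setIntegral_mono_on
              ((wl_int_rpow_exp hσ hx).mono_set (Set.Ioi_subset_Ioi hδ0pos.le))
              ((hint2.mono_set (Set.Ioi_subset_Ioi hδ0pos.le)).const_mul _)
              measurableSet_Ioi
            intro t ht
            have ht0 : 0 < t := lt_trans hδ0pos ht
            have hexp : Real.exp (-x * t) ≤ Real.exp (-(x * δ0 / 2)) * Real.exp (-(x / 2) * t) := by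
              rw [← Real.exp_add]
              apply Real.exp_le_exp.mpr
              have : δ0 ≤ t := (le_of_lt ht)
              nlinarith
            calc t ^ σ.re * Real.exp (-x * t)
                ≤ t ^ σ.re * (Real.exp (-(x * δ0 / 2)) * Real.exp (-(x / 2) * t)) :=
                  mul_le_mul_of_nonneg_left hexp (Real.rpow_nonneg ht0.le _)
              _ = Real.exp (-(x * δ0 / 2)) * (t ^ σ.re * Real.exp (-(x / 2) * t)) := by ring
        _ ≤ Real.exp (-(x * δ0 / 2)) * (∫ t in Set.Ioi (0:ℝ), t ^ σ.re * Real.exp (-(x / 2) * t)) := by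
            rw [← MeasureTheory.integral_const_mul]
            apply MeasureTheory.setIntegral_mono_set (hint2.const_mul _)
            · refine ae_restrict_of_forall_mem measurableSet_Ioi fun t ht => ?_
              have ht0 : (0:ℝ) < t := ht
              exact mul_nonneg (Real.exp_nonneg _)
                (mul_nonneg (Real.rpow_nonneg ht0.le _) (Real.exp_nonneg _))
            · exact HasSubset.Subset.eventuallyLE (Set.Ioi_subset_Ioi hδ0pos.le)
    have hform : ∫ t in Set.Ioi (0:ℝ), t ^ σ.re * Real.exp (-(x / 2) * t)
        = Real.Gamma (σ.re + 1) * (x / 2) ^ (-(σ.re + 1)) := by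
      have hform0 := Real.integral_rpow_mul_exp_neg_mul_Ioi
        (a := σ.re + 1) (r := x / 2) (by linarith) hx2
      rw [show ∫ t in Set.Ioi (0:ℝ), t ^ σ.re * Real.exp (-(x / 2) * t)
          = ∫ t in Set.Ioi (0:ℝ), t ^ (σ.re + 1 - 1) * Real.exp (-(x / 2 * t)) by
        apply MeasureTheory.setIntegral_congr_fun measurableSet_Ioi
        intro t ht
        dsimp only
        rw [show σ.re + 1 - 1 = σ.re by ring, neg_mul], hform0,
        one_div, Real.inv_rpow hx2.le, ← Real.rpow_neg hx2.le]
      ring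
    have hpow : (x / 2) ^ (-(σ.re + 1)) ≤ (c / 2) ^ (-(σ.re + 1)) := by
      apply Real.rpow_le_rpow_of_nonpos (half_pos hc) _ (by linarith)
      have : c ≤ c * ‖lam‖ := le_mul_of_one_le_right hc.le habs1
      linarith [hcx]
    have hstep3 : Real.exp (-(x * δ0 / 2)) ≤ ρ := by
      calc Real.exp (-(x * δ0 / 2)) ≤ Real.exp (-(c * δ0 / 2 * ‖lam‖)) := by
            apply Real.exp_le_exp.mpr
            nlinarith
        _ ≤ ρ := hRC _ (le_trans (le_trans (le_max_right _ _) (le_max_right _ _)) hR)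
    have hΓ1 := (Real.Gamma_pos_of_pos (show (0:ℝ) < σ.re + 1 by linarith)).le
    rw [norm_mul]
    calc ‖h 0‖ * ‖∫ t in Set.Ioi δ0, (t:ℂ) ^ σ * e t‖
        ≤ ‖h 0‖ * (Real.exp (-(x * δ0 / 2)) * (Real.Gamma (σ.re + 1) * (x / 2) ^ (-(σ.re + 1)))) := by
          apply mul_le_mul_of_nonneg_left _ (norm_nonneg _)
          calc ‖∫ t in Set.Ioi δ0, (t:ℂ) ^ σ * e t‖
              ≤ Real.exp (-(x * δ0 / 2)) * (∫ t in Set.Ioi (0:ℝ), t ^ σ.re * Real.exp (-(x / 2) * t)) :=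
                hstep1.trans hstep2
            _ = Real.exp (-(x * δ0 / 2)) * (Real.Gamma (σ.re + 1) * (x / 2) ^ (-(σ.re + 1))) := by
                rw [hform]
      _ ≤ ‖h 0‖ * (ρ * (Real.Gamma (σ.re + 1) * (c / 2) ^ (-(σ.re + 1)))) := by
          apply mul_le_mul_of_nonneg_left _ (norm_nonneg _)
          apply mul_le_mul hstep3 (mul_le_mul_of_nonneg_left hpow hΓ1)
            (mul_nonneg hΓ1 (Real.rpow_nonneg (by linarith : (0:ℝ) ≤ x / 2) _)) hρ0
      _ = CC * ρ := by rw [hCCdef]; ring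
  -- put the three bounds together
  have htot : ‖(∫ t in S, φ t * e t) - h 0 * Complex.Gamma (σ + 1) * lam ^ (-σ - 1)‖
      ≤ C0 * ρ := by
    rw [hmain]
    calc ‖(∫ t in Set.Ioc (0:ℝ) δ0, (t:ℂ) ^ σ * (h t - h 0) * e t)
          + (∫ t in S \ Set.Icc (0:ℝ) δ0, φ t * e t)
          - h 0 * ∫ t in Set.Ioi δ0, (t:ℂ) ^ σ * e t‖
        ≤ ‖(∫ t in Set.Ioc (0:ℝ) δ0, (t:ℂ) ^ σ * (h t - h 0) * e t)
          + (∫ t in S \ Set.Icc (0:ℝ) δ0, φ t * e t)‖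
          + ‖h 0 * ∫ t in Set.Ioi δ0, (t:ℂ) ^ σ * e t‖ := norm_sub_le _ _
      _ ≤ ‖∫ t in Set.Ioc (0:ℝ) δ0, (t:ℂ) ^ σ * (h t - h 0) * e t‖
          + ‖∫ t in S \ Set.Icc (0:ℝ) δ0, φ t * e t‖
          + ‖h 0 * ∫ t in Set.Ioi δ0, (t:ℂ) ^ σ * e t‖ := by
            linarith [norm_add_le (∫ t in Set.Ioc (0:ℝ) δ0, (t:ℂ) ^ σ * (h t - h 0) * e t)
              (∫ t in S \ Set.Icc (0:ℝ) δ0, φ t * e t)]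
      _ ≤ CA * ρ + K0 * ρ + CC * ρ := by linarith
      _ = C0 * ρ := by rw [hC0def]; ring
  -- compare ρ with ‖lam ^ (-σ - 2)‖
  have hnormpow : ρ ≤ Real.exp (θ * |σ.im|) * ‖lam ^ (-σ - 2)‖ := by
    rw [Complex.norm_cpow_of_ne_zero hne]
    have hre2 : (-σ - 2).re = -(σ.re + 2) := by simp; ring
    have him2 : (-σ - 2).im = -σ.im := by simp
    rw [hre2, him2]
    have hEpos : 0 < Real.exp (lam.arg * -σ.im) := Real.exp_pos _
    have hexp : Real.exp (lam.arg * -σ.im) ≤ Real.exp (θ * |σ.im|) := by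
      apply Real.exp_le_exp.mpr
      calc lam.arg * -σ.im ≤ |lam.arg * -σ.im| := le_abs_self _
        _ = |lam.arg| * |σ.im| := by rw [abs_mul, abs_neg]
        _ ≤ θ * |σ.im| := mul_le_mul_of_nonneg_right harg (abs_nonneg _)
    calc ρ = Real.exp (lam.arg * -σ.im) * (ρ / Real.exp (lam.arg * -σ.im)) := by
          field_simp
      _ ≤ Real.exp (θ * |σ.im|) * (ρ / Real.exp (lam.arg * -σ.im)) :=
          mul_le_mul_of_nonneg_right hexp (div_nonneg hρ0 hEpos.le)
  calc ‖(∫ t in S, φ t * Complex.exp (-lam * t))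
        - h 0 * Complex.Gamma (σ + 1) * lam ^ (-σ - 1)‖ ≤ C0 * ρ := htot
    _ ≤ C0 * (Real.exp (θ * |σ.im|) * ‖lam ^ (-σ - 2)‖) :=
        mul_le_mul_of_nonneg_left hnormpow hC00
    _ = C0 * Real.exp (θ * |σ.im|) * ‖lam ^ (-σ - 2)‖ := by ring
end

section
/- Let a, b > 0, φ as in the Section 2 assumptions, and F(z) = ∫_{-a}^{b} φ(t) e^{zt} dt. Then as n → ∞, F(nz) = f₂(0) Γ(ν+1) (nz)^{-ν-1} e^{bnz}(1 + O(1/n)) uniformly for z in a compact subset of {Re z > 0}. -/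
set_option maxHeartbeats 1000000

section
open MeasureTheory Set Complex Filter Metric

namespace Watson

lemma integrableOn_rpow_exp {σ : ℝ} (hσ : -1 < σ) {c : ℝ} (hc : 0 < c) :
    IntegrableOn (fun t : ℝ => t ^ σ * Real.exp (-c * t)) (Ioi 0) := by
  simpa [Real.rpow_one] using integrableOn_rpow_mul_exp_neg_mul_rpow hσ zero_lt_one hc

lemma norm_cpow_exp {s w : ℂ} {t : ℝ} (ht : 0 < t) :
    ‖(t : ℂ) ^ s * Complex.exp (-(w * t))‖ = t ^ s.re * Real.exp (-w.re * t) := by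
  rw [norm_mul, Complex.norm_cpow_eq_rpow_re_of_pos ht, Complex.norm_exp]
  congr 2
  simp [Complex.mul_re]

lemma contOn_cpow_exp (s w : ℂ) :
    ContinuousOn (fun t : ℝ => (t : ℂ) ^ s * Complex.exp (-(w * t))) (Ioi 0) := by
  apply ContinuousOn.mul
  · intro t ht
    exact (continuousAt_ofReal_cpow_const t s (Or.inr (mem_Ioi.mp ht).ne')).continuousWithinAt
  · fun_prop

lemma meas_cpow_exp (s w : ℂ) :
    AEStronglyMeasurable (fun t : ℝ => (t : ℂ) ^ s * Complex.exp (-(w * t)))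
      (volume.restrict (Ioi 0)) :=
  (contOn_cpow_exp s w).aestronglyMeasurable measurableSet_Ioi

lemma integrableOn_cpow_exp {s : ℂ} (hs : -1 < s.re) {w : ℂ} (hw : 0 < w.re) :
    IntegrableOn (fun t : ℝ => (t : ℂ) ^ s * Complex.exp (-(w * t))) (Ioi 0) := by
  refine (integrableOn_rpow_exp hs hw).mono' (meas_cpow_exp s w) ?_
  filter_upwards [self_mem_ae_restrict measurableSet_Ioi] with t ht
  rw [norm_cpow_exp (mem_Ioi.mp ht)]

lemma key_differentiable {s : ℂ} (hs : -1 < s.re) {w : ℂ} (hw : 0 < w.re) :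
    DifferentiableAt ℂ
      (fun w : ℂ => ∫ t in Ioi (0:ℝ), (t : ℂ) ^ s * Complex.exp (-(w * t))) w := by
  set F : ℂ → ℝ → ℂ := fun x t => (t : ℂ) ^ s * Complex.exp (-(x * t))
  set F' : ℂ → ℝ → ℂ := fun x t => (t : ℂ) ^ s * (Complex.exp (-(x * t)) * (-(t : ℂ)))
  have hball : ∀ x ∈ ball w (w.re / 2), w.re / 2 ≤ x.re := by
    intro x hx
    have : |x.re - w.re| ≤ dist x w := by
      rw [Complex.dist_eq]
      simpa using Complex.abs_re_le_norm (x - w)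
    have := abs_le.mp (this.trans (le_of_lt (mem_ball.mp hx)))
    linarith [this.1]
  have h := hasDerivAt_integral_of_dominated_loc_of_deriv_le
      (F := F) (F' := F')
      (x₀ := w) (s := ball w (w.re / 2)) (bound := fun t => t ^ (s.re + 1) * Real.exp (-(w.re / 2) * t))
      (ball_mem_nhds w (by positivity))
      (Filter.Eventually.of_forall fun x => meas_cpow_exp s x)
      (integrableOn_cpow_exp hs hw)
      ?_ ?_ ?_ ?_
  · exact h.2.differentiableAt
  · apply ContinuousOn.aestronglyMeasurable ?_ measurableSet_Ioi
    apply ContinuousOn.mul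
    · intro t ht
      exact (continuousAt_ofReal_cpow_const t s (Or.inr (mem_Ioi.mp ht).ne')).continuousWithinAt
    · fun_prop
  · filter_upwards [self_mem_ae_restrict measurableSet_Ioi] with t ht x hx
    have ht' : (0:ℝ) < t := mem_Ioi.mp ht
    have : ‖F' x t‖ = t ^ s.re * Real.exp (-x.re * t) * t := by
      simp only [F', norm_mul, Complex.norm_exp, norm_neg,
        Complex.norm_real, Real.norm_eq_abs, abs_of_pos ht', Complex.norm_cpow_eq_rpow_re_of_pos ht']
      rw [mul_assoc]
      congr 2
      simp [Complex.mul_re]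
    rw [this]
    have h1 : Real.exp (-x.re * t) ≤ Real.exp (-(w.re / 2) * t) := by
      apply Real.exp_le_exp.mpr
      have := hball x hx
      nlinarith
    calc t ^ s.re * Real.exp (-x.re * t) * t
        ≤ t ^ s.re * Real.exp (-(w.re / 2) * t) * t := by
          apply mul_le_mul_of_nonneg_right _ ht'.le
          exact mul_le_mul_of_nonneg_left h1 (Real.rpow_nonneg ht'.le _)
      _ = t ^ (s.re + 1) * Real.exp (-(w.re / 2) * t) := by
          rw [Real.rpow_add ht', Real.rpow_one]; ring
  · exact integrableOn_rpow_exp (by linarith) (by positivity)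
  · filter_upwards [self_mem_ae_restrict measurableSet_Ioi] with t _ x _
    have : HasDerivAt (fun x : ℂ => Complex.exp (-(x * t))) (Complex.exp (-(x * t)) * (-(t:ℂ))) x := by
      have h1 : HasDerivAt (fun x : ℂ => -(x * t)) (-(t:ℂ)) x := (hasDerivAt_mul_const (t:ℂ)).neg
      exact h1.cexp
    exact this.const_mul _

lemma key_integral {s : ℂ} (hs : 0 < s.re) {w : ℂ} (hw : 0 < w.re) :
    ∫ t in Ioi (0:ℝ), (t : ℂ) ^ (s - 1) * Complex.exp (-(w * t))
      = Complex.Gamma s * w ^ (-s) := by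
  have hU : IsOpen {z : ℂ | 0 < z.re} := isOpen_lt continuous_const Complex.continuous_re
  have hs' : -1 < (s - 1).re := by simp; linarith
  have hG : AnalyticOnNhd ℂ
      (fun w : ℂ => ∫ t in Ioi (0:ℝ), (t : ℂ) ^ (s - 1) * Complex.exp (-(w * t)))
      {z : ℂ | 0 < z.re} := by
    apply DifferentiableOn.analyticOnNhd _ hU
    intro x hx
    exact (key_differentiable hs' hx).differentiableWithinAt
  have hH : AnalyticOnNhd ℂ (fun w : ℂ => Complex.Gamma s * w ^ (-s)) {z : ℂ | 0 < z.re} := by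
    apply DifferentiableOn.analyticOnNhd _ hU
    intro x hx
    apply DifferentiableAt.differentiableWithinAt
    apply DifferentiableAt.const_mul
    exact (differentiableAt_id.cpow (differentiableAt_const _)
      (Or.inl (by simpa using lt_of_lt_of_le hx le_rfl : 0 < (x:ℂ).re)))
  have hconn : IsPreconnected {z : ℂ | 0 < z.re} := by
    apply Convex.isPreconnected
    exact convex_halfSpace_re_gt 0
  have hfreq : ∃ᶠ z in nhdsWithin 1 {(1:ℂ)}ᶜ,
      (fun w : ℂ => ∫ t in Ioi (0:ℝ), (t : ℂ) ^ (s - 1) * Complex.exp (-(w * t))) z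
        = (fun w : ℂ => Complex.Gamma s * w ^ (-s)) z := by
    have hreal : ∀ r : ℝ, 0 < r →
        (∫ t in Ioi (0:ℝ), (t : ℂ) ^ (s - 1) * Complex.exp (-((r:ℂ) * t)))
          = Complex.Gamma s * (r:ℂ) ^ (-s) := by
      intro r hr
      have := Complex.integral_cpow_mul_exp_neg_mul_Ioi hs hr
      rw [show ∫ t in Ioi (0:ℝ), (t : ℂ) ^ (s - 1) * Complex.exp (-((r:ℂ) * t))
          = ∫ (t : ℝ) in Ioi 0, (t:ℂ) ^ (s - 1) * Complex.exp (-(↑r * ↑t)) from rfl, this]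
      rw [Complex.cpow_neg, mul_comm, one_div, Complex.inv_cpow]
      exact fun h => by
        have := Complex.arg_ofReal_of_nonneg hr.le
        rw [this] at h; exact Real.pi_ne_zero h.symm
    set u : ℕ → ℂ := fun n => ((1 + (n+1:ℝ)⁻¹ : ℝ) : ℂ)
    have hu_pos : ∀ n : ℕ, (0:ℝ) < 1 + (n+1:ℝ)⁻¹ := fun n => by positivity
    have hu_ne : ∀ n, u n ≠ 1 := by
      intro n h
      have h2 : ((1 + (n+1:ℝ)⁻¹ : ℝ) : ℂ) = ((1:ℝ):ℂ) := by
        rw [Complex.ofReal_one]; exact h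
      have h' := Complex.ofReal_injective h2
      have hpos : (0:ℝ) < ((n:ℝ)+1)⁻¹ := by positivity
      push_cast at h'
      linarith
    have hu_tendsto : Tendsto u atTop (nhdsWithin 1 {(1:ℂ)}ᶜ) := by
      apply tendsto_nhdsWithin_of_tendsto_nhds_of_eventually_within
      · have : Tendsto (fun n : ℕ => (1 + (n+1:ℝ)⁻¹ : ℝ)) atTop (nhds 1) := by
          have h0 : Tendsto (fun n : ℕ => ((n:ℝ)+1)⁻¹) atTop (nhds 0) :=
            tendsto_one_div_add_atTop_nhds_zero_nat.congr (by intro n; rw [one_div])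
          simpa using tendsto_const_nhds.add h0
        have := (Complex.continuous_ofReal.tendsto 1).comp this
        rw [Complex.ofReal_one] at this; exact this
      · exact Filter.Eventually.of_forall fun n => hu_ne n
    apply hu_tendsto.frequently
    apply Filter.Frequently.of_forall
    intro n
    exact hreal _ (hu_pos n)
  have := hG.eqOn_of_preconnected_of_frequently_eq hH hconn
    (by norm_num : (1:ℂ) ∈ {z : ℂ | 0 < z.re}) hfreq
  exact this hw

lemma norm_cpow_real_mul {r : ℝ} (hr : 0 < r) {z : ℂ} (hz : z ≠ 0) (s : ℂ) :
    ‖((r : ℂ) * z) ^ s‖ = r ^ s.re * ‖z ^ s‖ := by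
  rw [Complex.norm_cpow_of_ne_zero (mul_ne_zero (by exact_mod_cast hr.ne') hz),
    Complex.norm_cpow_of_ne_zero hz, Complex.arg_real_mul _ hr, norm_mul,
    Complex.norm_real, Real.norm_eq_abs, abs_of_pos hr,
    Real.mul_rpow hr.le (norm_nonneg z)]
  ring

lemma mvt_bound {f : ℝ → ℂ} {δ M : ℝ}
    (hd : ∀ t ∈ Set.Icc (0 : ℝ) δ, DifferentiableAt ℝ f t)
    (hM : ∀ t ∈ Set.Icc (0 : ℝ) δ, ‖deriv f t‖ ≤ M)
    {s : ℝ} (hs : s ∈ Set.Icc (0:ℝ) δ) : ‖f s - f 0‖ ≤ M * s := by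
  have h0 : (0:ℝ) ∈ Set.Icc (0:ℝ) δ := ⟨le_refl _, hs.1.trans hs.2⟩
  have := (convex_Icc (0:ℝ) δ).norm_image_sub_le_of_norm_hasDerivWithin_le
    (fun t ht => ((hd t ht).hasDerivAt).hasDerivWithinAt) hM h0 hs
  simpa [_root_.abs_of_nonneg hs.1] using this

end Watson

end


open MeasureTheory intervalIntegral Complex

open Set Filter Metric in
/-- Asymptotics of `F(nz)` for `Re z > 0`:
`F(nz) = f₂(0) Γ(ν+1) (nz)^{-ν-1} e^{bnz} (1 + O(1/n))`
uniformly on compact subsets of the right half-plane. -/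
theorem F_asymptotics_right_halfplane
    (a b : ℝ) (ha : 0 < a) (hb : 0 < b)
    (μ ν : ℂ) (hμ : -1 < μ.re) (hν : -1 < ν.re)
    (φ f₁ f₂ : ℝ → ℂ)
    (hint : IntervalIntegrable φ volume (-a) b)
    (hφ₁ : ∀ t ∈ Set.Icc (-a) b, φ t = ((t + a : ℝ) : ℂ) ^ μ * f₁ (t + a))
    (hφ₂ : ∀ t ∈ Set.Icc (-a) b, φ t = ((b - t : ℝ) : ℂ) ^ ν * f₂ (b - t))
    (hf₁0 : f₁ 0 ≠ 0) (hf₂0 : f₂ 0 ≠ 0)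
    (hf₁ : ∃ δ > (0 : ℝ), (∀ t ∈ Set.Icc (0 : ℝ) δ, DifferentiableAt ℝ f₁ t) ∧
          ∃ M : ℝ, ∀ t ∈ Set.Icc (0 : ℝ) δ, ‖deriv f₁ t‖ ≤ M)
    (hf₂ : ∃ δ > (0 : ℝ), (∀ t ∈ Set.Icc (0 : ℝ) δ, DifferentiableAt ℝ f₂ t) ∧
          ∃ M : ℝ, ∀ t ∈ Set.Icc (0 : ℝ) δ, ‖deriv f₂ t‖ ≤ M)
    (F : ℂ → ℂ) (hF : ∀ z : ℂ, F z = ∫ t in (-a)..b, φ t * Complex.exp (z * t))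
    (K : Set ℂ) (hK : IsCompact K) (hKright : K ⊆ {z : ℂ | 0 < z.re}) :
    ∃ C : ℝ, ∃ N : ℕ, ∀ n ≥ N, ∀ z ∈ K,
      ‖F ((n : ℂ) * z) -
          f₂ 0 * Complex.Gamma (ν + 1) * ((n : ℂ) * z) ^ (-ν - 1) *
            Complex.exp ((b : ℂ) * n * z)‖
        ≤ (C / n) *
          ‖f₂ 0 * Complex.Gamma (ν + 1) * ((n : ℂ) * z) ^ (-ν - 1) *
            Complex.exp ((b : ℂ) * n * z)‖ := by
  rcases K.eq_empty_or_nonempty with hKe | hKne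
  · exact ⟨0, 0, fun n _ z hz => by rw [hKe] at hz; exact absurd hz (Set.notMem_empty z)⟩
  obtain ⟨δ, hδpos, hd2, M, hM2⟩ := hf₂
  have hM0 : 0 ≤ M := le_trans (norm_nonneg _) (hM2 0 ⟨le_rfl, hδpos.le⟩)
  set σ := ν.re with hσdef
  obtain ⟨z₀, hz₀K, hz₀⟩ := hK.exists_isMinOn hKne Complex.continuous_re.continuousOn
  set x₀ := z₀.re with hx₀def
  have hx₀ : 0 < x₀ := hKright hz₀K
  have hx₀le : ∀ z ∈ K, x₀ ≤ z.re := fun z hz => hz₀ hz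
  have hKne0 : ∀ z ∈ K, z ≠ 0 := by
    intro z hz h
    have := hKright hz
    rw [h] at this
    simp at this
  have hcont : ContinuousOn (fun z : ℂ => ‖z ^ (-(ν+1))‖) K := by
    intro z hz
    have hz0 : 0 < z.re := hKright hz
    exact ((continuousAt_cpow_const (Or.inl hz0)).norm).continuousWithinAt
  obtain ⟨zm, hzmK, hzm⟩ := hK.exists_isMinOn hKne hcont
  set m := ‖zm ^ (-(ν+1))‖ with hmdef
  have hm : 0 < m := by
    rw [hmdef, norm_pos_iff]
    intro h
    exact hKne0 zm hzmK ((Complex.cpow_eq_zero_iff _ _).mp h).1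
  have hmle : ∀ z ∈ K, m ≤ ‖z ^ (-(ν+1))‖ := fun z hz => hzm hz
  set δ₀ := min δ (a + b) with hδ₀def
  have hδ₀ : 0 < δ₀ := lt_min hδpos (by linarith)
  have hδ₀ab : δ₀ ≤ a + b := min_le_right _ _
  have hδ₀δ : δ₀ ≤ δ := min_le_left _ _
  set ψ : ℝ → ℂ := fun s => (s:ℂ) ^ ν * f₂ s with hψdef
  have hψφ : ∀ s ∈ Set.Icc (0:ℝ) (a+b), φ (b - s) = ψ s := by
    intro s hs
    have := hφ₂ (b - s) ⟨by linarith [hs.2], by linarith [hs.1]⟩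
    simpa [hψdef] using this
  have hψint : IntervalIntegrable ψ volume 0 (a+b) := by
    have h1 := hint.comp_sub_left b
    rw [show b - -a = a + b by ring, show b - b = 0 by ring] at h1
    have h2 := h1.symm
    rw [intervalIntegrable_iff, Set.uIoc_of_le (by linarith : (0:ℝ) ≤ a + b)] at h2 ⊢
    exact h2.congr_fun (fun s hs => hψφ s (Set.Ioc_subset_Icc_self hs)) measurableSet_Ioc
  have hψeint : ∀ w : ℂ, IntervalIntegrable
      (fun s : ℝ => ψ s * Complex.exp (-(w * s))) volume 0 (a+b) := by
    intro w
    exact hψint.mul_continuousOn (Continuous.continuousOn (by fun_prop))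
  have hFrw : ∀ w : ℂ, F w
      = Complex.exp (w * b) * ∫ s in (0:ℝ)..(a+b), ψ s * Complex.exp (-(w * s)) := by
    intro w
    rw [hF]
    have h1 := intervalIntegral.integral_comp_sub_left (a := 0) (b := a + b)
      (fun t : ℝ => φ t * Complex.exp (w * t)) b
    rw [show b - (a + b) = -a by ring, sub_zero] at h1
    rw [← h1, ← intervalIntegral.integral_const_mul]
    apply intervalIntegral.integral_congr
    intro s hs
    rw [Set.uIcc_of_le (by linarith : (0:ℝ) ≤ a + b)] at hs
    simp only [hψφ s hs]
    push_cast
    rw [show w * ((b:ℂ) - (s:ℂ)) = w * b + -(w * s) by ring, Complex.exp_add]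
    ring
  have hνre : (0:ℝ) < (ν + 1).re := by simp only [Complex.add_re, Complex.one_re]; linarith
  have hkey : ∀ w : ℂ, 0 < w.re →
      (∫ s in Set.Ioi (0:ℝ), (s:ℂ) ^ ν * Complex.exp (-(w * s)))
        = Complex.Gamma (ν+1) * w ^ (-(ν+1)) := by
    intro w hw
    have := Watson.key_integral (s := ν + 1) hνre hw
    simpa using this
  set κ := x₀ * δ₀ with hκdef
  have hκpos : 0 < κ := mul_pos hx₀ hδ₀
  set P := ∫ s in δ₀..(a+b), ‖ψ s‖ with hPdef
  have hPnn : 0 ≤ P := intervalIntegral.integral_nonneg hδ₀ab (fun _ _ => norm_nonneg _)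
  have hQint : IntegrableOn (fun s : ℝ => s ^ σ * Real.exp (-x₀ * s)) (Set.Ioi δ₀) :=
    (Watson.integrableOn_rpow_exp hν hx₀).mono_set (Set.Ioi_subset_Ioi hδ₀.le)
  set Q := ∫ s in Set.Ioi δ₀, s ^ σ * Real.exp (-x₀ * s) with hQdef
  have hQnn : 0 ≤ Q := setIntegral_nonneg measurableSet_Ioi
    (fun s hs => by have h : (0:ℝ) < s := lt_trans hδ₀ hs; positivity)
  set c' := ‖f₂ 0‖ * (Q * Real.exp κ) with hc'def
  have hc'nn : 0 ≤ c' := by positivity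
  have hΓpos : 0 < Real.Gamma (σ + 2) := Real.Gamma_pos_of_pos (by linarith)
  set C₁ := M * Real.Gamma (σ + 2) * x₀ ^ (-(σ+2)) with hC₁def
  have hC₁nn : 0 ≤ C₁ := by positivity
  set c₀ := ‖f₂ 0‖ * ‖Complex.Gamma (ν+1)‖ * m with hc₀def
  have hc₀ : 0 < c₀ := by
    apply mul_pos (mul_pos _ _) hm
    · exact norm_pos_iff.mpr hf₂0
    · exact norm_pos_iff.mpr (Complex.Gamma_ne_zero_of_re_pos hνre)
  set ε := (1 + P + c')⁻¹ with hεdef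
  have hε : 0 < ε := by positivity
  have htend : Tendsto (fun n : ℕ => ((n:ℝ)) ^ (σ + 2) * Real.exp (-κ * n)) atTop (nhds 0) :=
    (tendsto_rpow_mul_exp_neg_mul_atTop_nhds_zero (σ+2) κ hκpos).comp
      tendsto_natCast_atTop_atTop
  obtain ⟨N₀, hN₀⟩ := Filter.eventually_atTop.mp (htend.eventually (gt_mem_nhds hε))
  refine ⟨(C₁ + 2) / c₀, max N₀ 1, ?_⟩
  intro n hn z hz
  have hn1 : 1 ≤ n := le_trans (le_max_right _ _) hn
  have hnN₀ : N₀ ≤ n := le_trans (le_max_left _ _) hn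
  have hnR : (1:ℝ) ≤ (n:ℝ) := by exact_mod_cast hn1
  have hnpos : (0:ℝ) < n := by linarith
  set w := (n:ℂ) * z with hwdef
  have hzre : 0 < z.re := hKright hz
  have hz0 : z ≠ 0 := hKne0 z hz
  have hwre : w.re = n * z.re := by
    rw [hwdef, Complex.mul_re]
    simp
  have hwpos : 0 < w.re := by rw [hwre]; positivity
  have hwx₀ : (n:ℝ) * x₀ ≤ w.re := by
    rw [hwre]
    exact mul_le_mul_of_nonneg_left (hx₀le z hz) hnpos.le
  have hIcpow : IntegrableOn (fun s : ℝ => (s:ℂ)^ν * Complex.exp (-(w*s))) (Set.Ioi 0) :=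
    Watson.integrableOn_cpow_exp hν hwpos
  -- splitting the Gamma integral
  have hsplitI : (∫ s in Set.Ioi (0:ℝ), (s:ℂ)^ν * Complex.exp (-(w*s)))
      = (∫ s in (0:ℝ)..δ₀, (s:ℂ)^ν * Complex.exp (-(w*s)))
        + ∫ s in Set.Ioi δ₀, (s:ℂ)^ν * Complex.exp (-(w*s)) := by
    rw [intervalIntegral.integral_of_le hδ₀.le,
      ← MeasureTheory.setIntegral_union (Set.Ioc_disjoint_Ioi le_rfl) measurableSet_Ioi
        (hIcpow.mono_set Set.Ioc_subset_Ioi_self)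
        (hIcpow.mono_set (Set.Ioi_subset_Ioi hδ₀.le)),
      Set.Ioc_union_Ioi_eq_Ioi hδ₀.le]
  have hsub1 : Set.uIcc (0:ℝ) δ₀ ⊆ Set.uIcc (0:ℝ) (a+b) := by
    rw [Set.uIcc_of_le hδ₀.le, Set.uIcc_of_le (by linarith : (0:ℝ) ≤ a+b)]
    exact Set.Icc_subset_Icc le_rfl hδ₀ab
  have hsub2 : Set.uIcc δ₀ (a+b) ⊆ Set.uIcc (0:ℝ) (a+b) := by
    rw [Set.uIcc_of_le hδ₀ab, Set.uIcc_of_le (by linarith : (0:ℝ) ≤ a+b)]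
    exact Set.Icc_subset_Icc hδ₀.le le_rfl
  have hsplitJ : (∫ s in (0:ℝ)..(a+b), ψ s * Complex.exp (-(w*s)))
      = (∫ s in (0:ℝ)..δ₀, ψ s * Complex.exp (-(w*s)))
        + ∫ s in δ₀..(a+b), ψ s * Complex.exp (-(w*s)) :=
    (intervalIntegral.integral_add_adjacent_intervals
      ((hψeint w).mono_set hsub1) ((hψeint w).mono_set hsub2)).symm
  have hgint0 : IntervalIntegrable (fun s : ℝ => (s:ℂ)^ν * Complex.exp (-(w*s))) volume 0 δ₀ := by
    rw [intervalIntegrable_iff, Set.uIoc_of_le hδ₀.le]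
    exact hIcpow.mono_set Set.Ioc_subset_Ioi_self
  have hA1eq : (∫ s in (0:ℝ)..δ₀, ψ s * Complex.exp (-(w*s)))
        - f₂ 0 * ∫ s in (0:ℝ)..δ₀, (s:ℂ)^ν * Complex.exp (-(w*s))
      = ∫ s in (0:ℝ)..δ₀, (s:ℂ)^ν * (f₂ s - f₂ 0) * Complex.exp (-(w*s)) := by
    rw [← intervalIntegral.integral_const_mul,
      ← intervalIntegral.integral_sub ((hψeint w).mono_set hsub1) (hgint0.const_mul _)]
    apply intervalIntegral.integral_congr
    intro s _
    simp only [hψdef]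
    ring
  -- bound 1
  have hbig : IntegrableOn (fun s : ℝ => s ^ (σ+1) * Real.exp (-((n:ℝ)*x₀) * s)) (Set.Ioi 0) :=
    Watson.integrableOn_rpow_exp (by linarith) (by positivity)
  have hbound1 : ‖∫ s in (0:ℝ)..δ₀, (s:ℂ)^ν * (f₂ s - f₂ 0) * Complex.exp (-(w*s))‖
      ≤ C₁ * (n:ℝ) ^ (-(σ+2)) := by
    have hintA1 : IntervalIntegrable
        (fun s : ℝ => (s:ℂ)^ν * (f₂ s - f₂ 0) * Complex.exp (-(w*s))) volume 0 δ₀ := by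
      have := ((hψeint w).mono_set hsub1).sub (hgint0.const_mul (f₂ 0))
      apply this.congr
      intro s _
      simp only [hψdef]
      ring
    have hptwise : ∀ s ∈ Set.Icc (0:ℝ) δ₀,
        ‖(s:ℂ)^ν * (f₂ s - f₂ 0) * Complex.exp (-(w*s))‖
          ≤ M * (s ^ (σ+1) * Real.exp (-((n:ℝ)*x₀) * s)) := by
      intro s hs
      rcases eq_or_lt_of_le hs.1 with h0 | hs0
      · rw [← h0]
        simp only [Complex.ofReal_zero, sub_self, mul_zero, zero_mul, mul_zero, norm_zero]
        positivity
      · rw [norm_mul, norm_mul,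
          Complex.norm_cpow_eq_rpow_re_of_pos hs0,
          Complex.norm_exp]
        have hre : (-(w * (s:ℂ))).re = -(w.re * s) := by simp [Complex.mul_re]
        rw [hre]
        have h1 : ‖f₂ s - f₂ 0‖ ≤ M * s :=
          Watson.mvt_bound hd2 hM2 ⟨hs0.le, hs.2.trans hδ₀δ⟩
        have h2 : Real.exp (-(w.re * s)) ≤ Real.exp (-((n:ℝ)*x₀) * s) := by
          apply Real.exp_le_exp.mpr
          nlinarith
        calc s ^ σ * ‖f₂ s - f₂ 0‖ * Real.exp (-(w.re*s))
            ≤ s ^ σ * (M * s) * Real.exp (-((n:ℝ)*x₀)*s) := by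
              apply mul_le_mul (mul_le_mul_of_nonneg_left h1 (Real.rpow_nonneg hs0.le _)) h2
                (Real.exp_pos _).le (by positivity)
          _ = M * (s ^ (σ+1) * Real.exp (-((n:ℝ)*x₀)*s)) := by
              rw [Real.rpow_add hs0, Real.rpow_one]; ring
    calc ‖∫ s in (0:ℝ)..δ₀, (s:ℂ)^ν * (f₂ s - f₂ 0) * Complex.exp (-(w*s))‖
        ≤ ∫ s in (0:ℝ)..δ₀, ‖(s:ℂ)^ν * (f₂ s - f₂ 0) * Complex.exp (-(w*s))‖ :=
          intervalIntegral.norm_integral_le_integral_norm hδ₀.le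
      _ ≤ ∫ s in (0:ℝ)..δ₀, M * (s ^ (σ+1) * Real.exp (-((n:ℝ)*x₀) * s)) := by
          have hbigI : IntervalIntegrable
              (fun s : ℝ => M * (s ^ (σ+1) * Real.exp (-((n:ℝ)*x₀) * s))) volume 0 δ₀ := by
            rw [intervalIntegrable_iff, Set.uIoc_of_le hδ₀.le]
            exact (hbig.mono_set Set.Ioc_subset_Ioi_self).const_mul M
          exact intervalIntegral.integral_mono_on hδ₀.le hintA1.norm hbigI hptwise
      _ ≤ ∫ s in Set.Ioi (0:ℝ), M * (s ^ (σ+1) * Real.exp (-((n:ℝ)*x₀) * s)) := by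
          rw [intervalIntegral.integral_of_le hδ₀.le]
          apply setIntegral_mono_set (hbig.const_mul M)
          · filter_upwards [self_mem_ae_restrict measurableSet_Ioi] with s hs
            have : (0:ℝ) < s := hs
            positivity
          · exact HasSubset.Subset.eventuallyLE Set.Ioc_subset_Ioi_self
      _ = M * ((1/((n:ℝ)*x₀)) ^ (σ+2) * Real.Gamma (σ+2)) := by
          rw [MeasureTheory.integral_const_mul]
          congr 1
          have := Real.integral_rpow_mul_exp_neg_mul_Ioi
            (a := σ + 2) (r := (n:ℝ)*x₀) (by linarith) (by positivity)
          rw [show σ + 2 - 1 = σ + 1 by ring] at this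
          rw [← this]
          apply setIntegral_congr_fun measurableSet_Ioi
          intro s _
          simp [neg_mul, mul_assoc]
      _ ≤ C₁ * (n:ℝ) ^ (-(σ+2)) := by
          apply le_of_eq
          rw [hC₁def, one_div, Real.inv_rpow (by positivity), ← Real.rpow_neg (by positivity),
            Real.mul_rpow hnpos.le hx₀.le]
          ring
  -- bound 2
  have hbound2 : ‖∫ s in δ₀..(a+b), ψ s * Complex.exp (-(w*s))‖
      ≤ P * Real.exp (-κ * n) := by
    calc ‖∫ s in δ₀..(a+b), ψ s * Complex.exp (-(w*s))‖
        ≤ ∫ s in δ₀..(a+b), ‖ψ s * Complex.exp (-(w*s))‖ :=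
          intervalIntegral.norm_integral_le_integral_norm hδ₀ab
      _ ≤ ∫ s in δ₀..(a+b), ‖ψ s‖ * Real.exp (-κ * n) := by
          apply intervalIntegral.integral_mono_on hδ₀ab ((hψeint w).mono_set hsub2).norm
            ((hψint.mono_set hsub2).norm.mul_const _)
          intro s hs
          rw [norm_mul, Complex.norm_exp]
          apply mul_le_mul_of_nonneg_left _ (norm_nonneg _)
          apply Real.exp_le_exp.mpr
          have hre : (-(w * (s:ℂ))).re = -(w.re * s) := by simp [Complex.mul_re]
          rw [hre, hκdef]
          have hsδ : δ₀ ≤ s := hs.1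
          nlinarith
      _ = P * Real.exp (-κ * n) := by
          rw [hPdef, ← intervalIntegral.integral_mul_const]
  -- bound 3
  have hbound3 : ‖∫ s in Set.Ioi δ₀, (s:ℂ)^ν * Complex.exp (-(w*s))‖
      ≤ Q * Real.exp κ * Real.exp (-κ * n) := by
    have hgint : Integrable (fun s : ℝ => (s ^ σ * Real.exp (-x₀ * s))
        * (Real.exp κ * Real.exp (-κ * n))) (volume.restrict (Set.Ioi δ₀)) :=
      hQint.mul_const _
    calc ‖∫ s in Set.Ioi δ₀, (s:ℂ)^ν * Complex.exp (-(w*s))‖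
        ≤ ∫ s in Set.Ioi δ₀, (s ^ σ * Real.exp (-x₀ * s)) * (Real.exp κ * Real.exp (-κ * n)) := by
          apply MeasureTheory.norm_integral_le_of_norm_le hgint
          filter_upwards [self_mem_ae_restrict measurableSet_Ioi] with s hs
          have hsδ : δ₀ < s := hs
          have hs0 : (0:ℝ) < s := lt_of_lt_of_le hδ₀ hsδ.le
          rw [Watson.norm_cpow_exp hs0]
          have hexp : Real.exp (-w.re * s) ≤ Real.exp κ * Real.exp (-κ * n) * Real.exp (-x₀ * s) := by
            rw [← Real.exp_add, ← Real.exp_add]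
            apply Real.exp_le_exp.mpr
            rw [hκdef]
            nlinarith [mul_le_mul_of_nonneg_right hwx₀ hs0.le,
              mul_le_mul_of_nonneg_left hsδ.le (mul_nonneg (sub_nonneg.mpr hnR) hx₀.le)]
          calc s ^ ν.re * Real.exp (-w.re * s)
              ≤ s ^ ν.re * (Real.exp κ * Real.exp (-κ * n) * Real.exp (-x₀ * s)) :=
                mul_le_mul_of_nonneg_left hexp (Real.rpow_nonneg hs0.le _)
            _ = s ^ σ * Real.exp (-x₀ * s) * (Real.exp κ * Real.exp (-κ * n)) := by
                rw [hσdef]; ring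
      _ = Q * Real.exp κ * Real.exp (-κ * n) := by
          rw [MeasureTheory.integral_mul_const, hQdef, mul_assoc]
  -- exponential smallness
  have hsmall := hN₀ n hnN₀
  have hexp_small : Real.exp (-κ * n) ≤ ε * (n:ℝ) ^ (-(σ+2)) := by
    rw [Real.rpow_neg hnpos.le]
    have h := le_of_lt hsmall
    calc Real.exp (-κ * n) = ((n:ℝ)^(σ+2) * Real.exp (-κ * n)) * ((n:ℝ)^(σ+2))⁻¹ := by
          rw [mul_comm ((n:ℝ)^(σ+2)) _, mul_assoc,
            mul_inv_cancel₀ (ne_of_gt (Real.rpow_pos_of_pos hnpos _)), mul_one]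
      _ ≤ ε * ((n:ℝ)^(σ+2))⁻¹ := mul_le_mul_of_nonneg_right h (by positivity)
  have hP_small : P * Real.exp (-κ * n) ≤ (n:ℝ) ^ (-(σ+2)) := by
    calc P * Real.exp (-κ * n) ≤ P * (ε * (n:ℝ) ^ (-(σ+2))) :=
          mul_le_mul_of_nonneg_left hexp_small hPnn
      _ = (P * ε) * (n:ℝ) ^ (-(σ+2)) := by ring
      _ ≤ 1 * (n:ℝ) ^ (-(σ+2)) := by
          apply mul_le_mul_of_nonneg_right _ (Real.rpow_nonneg hnpos.le _)
          rw [hεdef, ← div_eq_mul_inv]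
          exact div_le_one_of_le₀ (by linarith) (by positivity)
      _ = (n:ℝ) ^ (-(σ+2)) := one_mul _
  have hc'_small : ‖f₂ 0‖ * (Q * Real.exp κ * Real.exp (-κ * n)) ≤ (n:ℝ) ^ (-(σ+2)) := by
    calc ‖f₂ 0‖ * (Q * Real.exp κ * Real.exp (-κ * n)) = c' * Real.exp (-κ * n) := by
          rw [hc'def]; ring
      _ ≤ c' * (ε * (n:ℝ) ^ (-(σ+2))) := mul_le_mul_of_nonneg_left hexp_small hc'nn
      _ = (c' * ε) * (n:ℝ) ^ (-(σ+2)) := by ring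
      _ ≤ 1 * (n:ℝ) ^ (-(σ+2)) := by
          apply mul_le_mul_of_nonneg_right _ (Real.rpow_nonneg hnpos.le _)
          rw [hεdef, ← div_eq_mul_inv]
          exact div_le_one_of_le₀ (by linarith) (by positivity)
      _ = (n:ℝ) ^ (-(σ+2)) := one_mul _
  -- assemble
  have hexpb : Complex.exp ((b:ℂ) * n * z) = Complex.exp (w * b) := by
    rw [hwdef]; congr 1; ring
  have hcpow_eq : ((n:ℂ) * z) ^ (-ν - 1) = w ^ (-(ν+1)) := by
    rw [hwdef]; congr 1; ring
  rw [hexpb, hcpow_eq, hFrw w]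
  set J := ∫ s in (0:ℝ)..(a+b), ψ s * Complex.exp (-(w * s)) with hJdef
  set I := ∫ s in Set.Ioi (0:ℝ), (s:ℂ)^ν * Complex.exp (-(w*s)) with hIdef
  have hIval : I = Complex.Gamma (ν+1) * w ^ (-(ν+1)) := hkey w hwpos
  have hLHS : Complex.exp (w*b) * J
      - f₂ 0 * Complex.Gamma (ν+1) * w ^ (-(ν+1)) * Complex.exp (w*b)
      = Complex.exp (w*b) * (J - f₂ 0 * I) := by rw [hIval]; ring
  rw [hLHS, norm_mul]
  have hRHSnorm : ‖f₂ 0 * Complex.Gamma (ν+1) * w ^ (-(ν+1)) * Complex.exp (w*b)‖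
      = ‖Complex.exp (w*b)‖ * (‖f₂ 0‖ * ‖Complex.Gamma (ν+1)‖ * ‖w ^ (-(ν+1))‖) := by
    rw [norm_mul, norm_mul, norm_mul]; ring
  rw [hRHSnorm, show ((C₁+2)/c₀ / (n:ℝ)) * (‖Complex.exp (w*b)‖
      * (‖f₂ 0‖ * ‖Complex.Gamma (ν+1)‖ * ‖w ^ (-(ν+1))‖))
      = ‖Complex.exp (w*b)‖ * (((C₁+2)/c₀ / (n:ℝ))
      * (‖f₂ 0‖ * ‖Complex.Gamma (ν+1)‖ * ‖w ^ (-(ν+1))‖)) from by ring]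
  apply mul_le_mul_of_nonneg_left _ (norm_nonneg _)
  -- key estimate
  have hw_norm : ‖w ^ (-(ν+1))‖ = (n:ℝ) ^ (-(σ+1)) * ‖z ^ (-(ν+1))‖ := by
    rw [hwdef, show ((n:ℕ):ℂ) = (((n:ℝ)):ℂ) from by push_cast; rfl,
      Watson.norm_cpow_real_mul hnpos hz0]
    congr 2
  have hrest_lb : (C₁+2) * (n:ℝ)^(-(σ+2))
      ≤ ((C₁+2)/c₀ / (n:ℝ)) * (‖f₂ 0‖ * ‖Complex.Gamma (ν+1)‖ * ‖w ^ (-(ν+1))‖) := by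
    rw [hw_norm]
    have h1 : m ≤ ‖z ^ (-(ν+1))‖ := hmle z hz
    have heq : ((C₁+2)/c₀ / (n:ℝ)) * (‖f₂ 0‖ * ‖Complex.Gamma (ν+1)‖ * ((n:ℝ)^(-(σ+1)) * m))
        = (C₁+2) * ((n:ℝ)^(-(σ+1)) / (n:ℝ)) := by
      have hfold : ‖f₂ 0‖ * ‖Complex.Gamma (ν+1)‖ * ((n:ℝ)^(-(σ+1)) * m)
          = c₀ * (n:ℝ)^(-(σ+1)) := by rw [hc₀def]; ring
      rw [hfold]
      calc ((C₁+2)/c₀/(n:ℝ)) * (c₀ * (n:ℝ)^(-(σ+1)))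
          = ((C₁+2) * c₀ / c₀) * ((n:ℝ)^(-(σ+1)) / (n:ℝ)) := by ring
        _ = (C₁+2) * ((n:ℝ)^(-(σ+1)) / (n:ℝ)) := by
            rw [mul_div_assoc (C₁+2) c₀ c₀, div_self hc₀.ne', mul_one]
    have hstep : (C₁+2) * ((n:ℝ)^(-(σ+1)) / (n:ℝ)) = (C₁+2) * (n:ℝ)^(-(σ+2)) := by
      rw [show -(σ+2) = -(σ+1) + (-1) from by ring, Real.rpow_add hnpos, Real.rpow_neg_one,
        div_eq_mul_inv]
    calc (C₁+2) * (n:ℝ)^(-(σ+2)) = (C₁+2) * ((n:ℝ)^(-(σ+1)) / (n:ℝ)) := hstep.symm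
      _ = ((C₁+2)/c₀ / (n:ℝ)) * (‖f₂ 0‖ * ‖Complex.Gamma (ν+1)‖ * ((n:ℝ)^(-(σ+1)) * m)) :=
          heq.symm
      _ ≤ ((C₁+2)/c₀ / (n:ℝ)) * (‖f₂ 0‖ * ‖Complex.Gamma (ν+1)‖ * ((n:ℝ)^(-(σ+1)) * ‖z ^ (-(ν+1))‖)) := by
          apply mul_le_mul_of_nonneg_left _ (by positivity)
          apply mul_le_mul_of_nonneg_left _ (by positivity)
          exact mul_le_mul_of_nonneg_left h1 (Real.rpow_nonneg hnpos.le _)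
  refine le_trans ?_ hrest_lb
  have hdecomp : J - f₂ 0 * I
      = (∫ s in (0:ℝ)..δ₀, (s:ℂ)^ν * (f₂ s - f₂ 0) * Complex.exp (-(w*s)))
        + ((∫ s in δ₀..(a+b), ψ s * Complex.exp (-(w*s)))
        - f₂ 0 * ∫ s in Set.Ioi δ₀, (s:ℂ)^ν * Complex.exp (-(w*s))) := by
    rw [hsplitJ, hsplitI, ← hA1eq]; ring
  rw [hdecomp]
  calc ‖(∫ s in (0:ℝ)..δ₀, (s:ℂ)^ν * (f₂ s - f₂ 0) * Complex.exp (-(w*s)))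
        + ((∫ s in δ₀..(a+b), ψ s * Complex.exp (-(w*s)))
        - f₂ 0 * ∫ s in Set.Ioi δ₀, (s:ℂ)^ν * Complex.exp (-(w*s)))‖
      ≤ ‖∫ s in (0:ℝ)..δ₀, (s:ℂ)^ν * (f₂ s - f₂ 0) * Complex.exp (-(w*s))‖
        + (‖∫ s in δ₀..(a+b), ψ s * Complex.exp (-(w*s))‖
        + ‖f₂ 0‖ * ‖∫ s in Set.Ioi δ₀, (s:ℂ)^ν * Complex.exp (-(w*s))‖) := by
        refine (norm_add_le _ _).trans ?_
        apply add_le_add le_rfl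
        refine (norm_sub_le _ _).trans ?_
        rw [norm_mul]
    _ ≤ C₁ * (n:ℝ)^(-(σ+2)) + ((n:ℝ)^(-(σ+2)) + (n:ℝ)^(-(σ+2))) := by
        apply add_le_add hbound1
        apply add_le_add (hbound2.trans hP_small)
        calc ‖f₂ 0‖ * ‖∫ s in Set.Ioi δ₀, (s:ℂ)^ν * Complex.exp (-(w*s))‖
            ≤ ‖f₂ 0‖ * (Q * Real.exp κ * Real.exp (-κ * n)) :=
              mul_le_mul_of_nonneg_left hbound3 (norm_nonneg _)
          _ ≤ (n:ℝ)^(-(σ+2)) := hc'_small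
    _ = (C₁+2) * (n:ℝ)^(-(σ+2)) := by ring
end

section
/- Let a > 0 and φ(t) = (t+a)^μ f₁(t+a) on [-a, 0], where Re μ > -1, f₁ is integrable with f₁(0) finite and nonzero and f₁' bounded near 0. Then ∫_{-a}^{0} φ(t) t^n dt = (-1)^n f₁(0) Γ(μ+1) n^{-μ-1} a^{n+μ+1} + O(n^{-μ-2} a^n) as n → ∞. -/
open MeasureTheory intervalIntegral Complex Filter Asymptotics
open Set


lemma aux_one_sub_exp_le (x : ℝ) : 1 - Real.exp (-x) ≤ x := by
  linarith [Real.one_sub_le_exp_neg x]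

lemma aux_half_le_one_sub_exp {x : ℝ} (hx : 0 ≤ x) (hx1 : x ≤ 1) :
    x / 2 ≤ 1 - Real.exp (-x) := by
  have h1 : x + 1 ≤ Real.exp x := Real.add_one_le_exp x
  have h2 : Real.exp (-x) = (Real.exp x)⁻¹ := Real.exp_neg x
  have h3 : (0:ℝ) < Real.exp x := Real.exp_pos x
  have h4 : Real.exp (-x) ≤ (x + 1)⁻¹ := by
    rw [h2]
    exact inv_anti₀ (by linarith) h1
  have h5 : (x + 1)⁻¹ ≤ 1 - x / 2 := by
    rw [inv_le_iff_one_le_mul₀ (by linarith)]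
    nlinarith
  linarith

lemma aux_exp_le_one_sub_half {x : ℝ} (hx : 0 ≤ x) (hx1 : x ≤ 1) :
    Real.exp (-x) ≤ 1 - x / 2 := by linarith [aux_half_le_one_sub_exp hx hx1]

/-- key cpow estimate: `‖(1-e^{-x})^μ - x^μ‖ ≤ 2‖μ‖ x^{Re μ + 1}` for small `x`. -/
lemma aux_cpow_diff (μ : ℂ) {x : ℝ} (hx : 0 < x) (hx1 : x ≤ 1) (hxμ : ‖μ‖ * x ≤ 1) :
    ‖((1 - Real.exp (-x) : ℝ) : ℂ) ^ μ - (x : ℂ) ^ μ‖ ≤ 2 * ‖μ‖ * x ^ (μ.re + 1) := by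
  set u : ℝ := 1 - Real.exp (-x) with hu
  have hex : Real.exp (-x) < 1 := by
    rw [Real.exp_lt_one_iff]; linarith
  have hu0 : 0 < u := by simp only [hu]; linarith
  have hux : u ≤ x := aux_one_sub_exp_le x
  set h : ℝ := u / x with hh
  have hh0 : 0 < h := div_pos hu0 hx
  have hh1 : h ≤ 1 := by rw [div_le_one hx]; exact hux
  -- h ≥ exp(-x) :  1 - e^{-x} ≥ x e^{-x}  ⟺  e^x - 1 ≥ x
  have hhe : Real.exp (-x) ≤ h := by
    rw [le_div_iff₀ hx]
    have := Real.add_one_le_exp x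
    have h3 : (0:ℝ) < Real.exp x := Real.exp_pos x
    have : Real.exp (-x) * (x + 1) ≤ 1 := by
      rw [Real.exp_neg]
      rw [inv_mul_le_iff₀ h3]; linarith
    nlinarith [Real.exp_pos (-x)]
  have hlog_le : |Real.log h| ≤ x := by
    rw [abs_le]
    constructor
    · have := Real.log_le_log (Real.exp_pos (-x)) hhe
      rwa [Real.log_exp] at this
    · calc Real.log h ≤ 0 := Real.log_nonpos hh0.le hh1
        _ ≤ x := hx.le
  have hxu : u = x * h := by rw [hh, mul_div_cancel₀ _ hx.ne']
  have hsplit : ((u : ℝ) : ℂ) ^ μ = (x : ℂ) ^ μ * ((h : ℝ) : ℂ) ^ μ := by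
    rw [hxu, Complex.ofReal_mul]
    exact mul_cpow_ofReal_nonneg hx.le hh0.le μ
  have hhexp : ((h : ℝ) : ℂ) ^ μ = Complex.exp ((Real.log h : ℂ) * μ) := by
    rw [Complex.cpow_def_of_ne_zero (by exact_mod_cast hh0.ne'), Complex.ofReal_log hh0.le]
  have hz : ‖(Real.log h : ℂ) * μ‖ ≤ x * ‖μ‖ := by
    rw [norm_mul, Complex.norm_real, Real.norm_eq_abs]
    exact mul_le_mul_of_nonneg_right hlog_le (norm_nonneg μ)
  have hz1 : ‖(Real.log h : ℂ) * μ‖ ≤ 1 := hz.trans (by rw [mul_comm]; exact hxμ)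
  have hexp_est : ‖((h : ℝ) : ℂ) ^ μ - 1‖ ≤ 2 * (x * ‖μ‖) := by
    rw [hhexp]
    calc ‖Complex.exp ((Real.log h : ℂ) * μ) - 1‖
        ≤ 2 * ‖(Real.log h : ℂ) * μ‖ := Complex.norm_exp_sub_one_le hz1
      _ ≤ 2 * (x * ‖μ‖) := by linarith
  have hnx : ‖(x : ℂ) ^ μ‖ = x ^ μ.re := by
    rw [Complex.norm_cpow_eq_rpow_re_of_pos hx]
  calc ‖((u : ℝ) : ℂ) ^ μ - (x : ℂ) ^ μ‖
      = ‖(x : ℂ) ^ μ‖ * ‖((h : ℝ) : ℂ) ^ μ - 1‖ := by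
        rw [hsplit, ← norm_mul]; ring_nf
    _ ≤ x ^ μ.re * (2 * (x * ‖μ‖)) := by
        rw [hnx]
        exact mul_le_mul_of_nonneg_left hexp_est (Real.rpow_nonneg hx.le _)
    _ = 2 * ‖μ‖ * x ^ (μ.re + 1) := by
        rw [Real.rpow_add hx, Real.rpow_one]; ring


lemma aux_base_pow (c : ℝ) {x : ℝ} (hx : 0 < x) (hx1 : x ≤ 1) :
    (1 - Real.exp (-x)) ^ c ≤ max 1 ((2:ℝ) ^ (-c)) * x ^ c := by
  have hu0 : 0 < 1 - Real.exp (-x) := by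
    have : Real.exp (-x) < 1 := by rw [Real.exp_lt_one_iff]; linarith
    linarith
  rcases le_or_gt 0 c with hc | hc
  · calc (1 - Real.exp (-x)) ^ c ≤ x ^ c :=
          Real.rpow_le_rpow hu0.le (aux_one_sub_exp_le x) hc
      _ ≤ max 1 ((2:ℝ) ^ (-c)) * x ^ c :=
          le_mul_of_one_le_left (Real.rpow_nonneg hx.le c) (le_max_left _ _)
  · have h1 : (1 - Real.exp (-x)) ^ c ≤ (x / 2) ^ c :=
      Real.rpow_le_rpow_of_nonpos (by linarith) (aux_half_le_one_sub_exp hx.le hx1) hc.le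
    have h2 : (x / 2 : ℝ) ^ c = x ^ c * (2:ℝ) ^ (-c) := by
      rw [div_eq_mul_inv, Real.mul_rpow hx.le (by norm_num), Real.inv_rpow (by norm_num),
        ← Real.rpow_neg (by norm_num)]
    calc (1 - Real.exp (-x)) ^ c ≤ x ^ c * (2:ℝ) ^ (-c) := h2 ▸ h1
      _ ≤ max 1 ((2:ℝ) ^ (-c)) * x ^ c := by
          rw [mul_comm]
          exact mul_le_mul_of_nonneg_right (le_max_right _ _) (Real.rpow_nonneg hx.le c)

lemma aux_kernel (μ : ℂ) (f₁ : ℝ → ℂ) (a δ M : ℝ) (ha : 0 < a) (hM : 0 ≤ M)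
    (hf₁lip : ∀ y ∈ Icc (0:ℝ) δ, ‖f₁ y - f₁ 0‖ ≤ M * y)
    {x : ℝ} (hx : 0 < x) (hx1 : x ≤ 1) (hxμ : ‖μ‖ * x ≤ 1) (hxδ : a * x ≤ δ) :
    ‖(Real.exp (-x) : ℂ) * ((1 - Real.exp (-x) : ℝ) : ℂ) ^ μ * f₁ (a * (1 - Real.exp (-x)))
        - f₁ 0 * (x : ℂ) ^ μ‖
      ≤ (max 1 ((2:ℝ) ^ (-μ.re)) * (M * a) + ‖f₁ 0‖ * (2 * ‖μ‖ + 1)) * x ^ (μ.re + 1) := by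
  set e : ℝ := Real.exp (-x) with he
  set u : ℝ := 1 - e with hu
  have hu0 : 0 < u := by
    rw [hu, he, sub_pos, Real.exp_lt_one_iff]; linarith
  have hux : u ≤ x := aux_one_sub_exp_le x
  have he0 : 0 < e := Real.exp_pos _
  have he1 : e ≤ 1 := by rw [he, Real.exp_le_one_iff]; linarith
  have hy : a * u ∈ Icc (0:ℝ) δ := by
    constructor
    · positivity
    · calc a * u ≤ a * x := mul_le_mul_of_nonneg_left hux ha.le
        _ ≤ δ := hxδ
  have hdecomp :
      (e : ℂ) * ((u : ℝ) : ℂ) ^ μ * f₁ (a * u) - f₁ 0 * (x : ℂ) ^ μ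
        = (e : ℂ) * ((u : ℝ) : ℂ) ^ μ * (f₁ (a * u) - f₁ 0)
          + f₁ 0 * ((e : ℂ) * (((u : ℝ) : ℂ) ^ μ - (x : ℂ) ^ μ))
          + f₁ 0 * (((e : ℂ) - 1) * (x : ℂ) ^ μ) := by ring
  have hnu : ‖((u : ℝ) : ℂ) ^ μ‖ = u ^ μ.re := by
    rw [Complex.norm_cpow_eq_rpow_re_of_pos hu0]
  have hnx : ‖(x : ℂ) ^ μ‖ = x ^ μ.re := by
    rw [Complex.norm_cpow_eq_rpow_re_of_pos hx]
  have hne : ‖(e : ℂ)‖ = e := by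
    rw [Complex.norm_real, Real.norm_eq_abs, abs_of_pos he0]
  have hxpow : x ^ (μ.re + 1) = x ^ μ.re * x := by
    rw [Real.rpow_add hx, Real.rpow_one]
  have hT1 : ‖(e : ℂ) * ((u : ℝ) : ℂ) ^ μ * (f₁ (a * u) - f₁ 0)‖
      ≤ max 1 ((2:ℝ) ^ (-μ.re)) * (M * a) * x ^ (μ.re + 1) := by
    rw [norm_mul, norm_mul, hne, hnu]
    have b1 : u ^ μ.re ≤ max 1 ((2:ℝ) ^ (-μ.re)) * x ^ μ.re := aux_base_pow μ.re hx hx1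
    have b2 : ‖f₁ (a * u) - f₁ 0‖ ≤ M * (a * x) := by
      calc ‖f₁ (a * u) - f₁ 0‖ ≤ M * (a * u) := hf₁lip _ hy
        _ ≤ M * (a * x) := by
            apply mul_le_mul_of_nonneg_left _ hM
            exact mul_le_mul_of_nonneg_left hux ha.le
    calc e * u ^ μ.re * ‖f₁ (a * u) - f₁ 0‖
        ≤ 1 * (max 1 ((2:ℝ) ^ (-μ.re)) * x ^ μ.re) * (M * (a * x)) := by
          apply mul_le_mul
          · exact mul_le_mul he1 b1 (Real.rpow_nonneg hu0.le _) (by norm_num)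
          · exact b2
          · exact norm_nonneg _
          · positivity
      _ = max 1 ((2:ℝ) ^ (-μ.re)) * (M * a) * x ^ (μ.re + 1) := by
          rw [hxpow]; ring
  have hT2 : ‖f₁ 0 * ((e : ℂ) * (((u : ℝ) : ℂ) ^ μ - (x : ℂ) ^ μ))‖
      ≤ ‖f₁ 0‖ * (2 * ‖μ‖) * x ^ (μ.re + 1) := by
    rw [norm_mul, norm_mul, hne]
    have := aux_cpow_diff μ hx hx1 hxμ
    calc ‖f₁ 0‖ * (e * ‖((u : ℝ) : ℂ) ^ μ - (x : ℂ) ^ μ‖)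
        ≤ ‖f₁ 0‖ * (1 * (2 * ‖μ‖ * x ^ (μ.re + 1))) := by
          apply mul_le_mul_of_nonneg_left _ (norm_nonneg _)
          exact mul_le_mul he1 this (norm_nonneg _) (by norm_num)
      _ = ‖f₁ 0‖ * (2 * ‖μ‖) * x ^ (μ.re + 1) := by ring
  have hT3 : ‖f₁ 0 * (((e : ℂ) - 1) * (x : ℂ) ^ μ)‖
      ≤ ‖f₁ 0‖ * x ^ (μ.re + 1) := by
    rw [norm_mul, norm_mul, hnx]
    have hne1 : ‖(e : ℂ) - 1‖ ≤ x := by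
      have : ((e : ℂ) - 1) = ((e - 1 : ℝ) : ℂ) := by push_cast; ring
      rw [this, Complex.norm_real, Real.norm_eq_abs, abs_of_nonpos (by linarith)]
      have := aux_one_sub_exp_le x
      rw [← he] at this; linarith
    calc ‖f₁ 0‖ * (‖(e : ℂ) - 1‖ * x ^ μ.re)
        ≤ ‖f₁ 0‖ * (x * x ^ μ.re) := by
          apply mul_le_mul_of_nonneg_left _ (norm_nonneg _)
          exact mul_le_mul_of_nonneg_right hne1 (Real.rpow_nonneg hx.le _)
      _ = ‖f₁ 0‖ * x ^ (μ.re + 1) := by rw [hxpow]; ring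
  calc ‖(e : ℂ) * ((u : ℝ) : ℂ) ^ μ * f₁ (a * u) - f₁ 0 * (x : ℂ) ^ μ‖
      ≤ ‖(e : ℂ) * ((u : ℝ) : ℂ) ^ μ * (f₁ (a * u) - f₁ 0)‖
        + ‖f₁ 0 * ((e : ℂ) * (((u : ℝ) : ℂ) ^ μ - (x : ℂ) ^ μ))‖
        + ‖f₁ 0 * (((e : ℂ) - 1) * (x : ℂ) ^ μ)‖ := by
        rw [hdecomp]
        exact (norm_add_le _ _).trans (by gcongr; exact norm_add_le _ _)
    _ ≤ max 1 ((2:ℝ) ^ (-μ.re)) * (M * a) * x ^ (μ.re + 1)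
        + ‖f₁ 0‖ * (2 * ‖μ‖) * x ^ (μ.re + 1) + ‖f₁ 0‖ * x ^ (μ.re + 1) := by
        exact add_le_add (add_le_add hT1 hT2) hT3
    _ = (max 1 ((2:ℝ) ^ (-μ.re)) * (M * a) + ‖f₁ 0‖ * (2 * ‖μ‖ + 1)) * x ^ (μ.re + 1) := by
        ring


lemma aux_hasDeriv (a : ℝ) (x : ℝ) :
    HasDerivAt (fun x : ℝ => -(a * Real.exp (-x))) (a * Real.exp (-x)) x := by
  have h := (Real.hasDerivAt_exp (-x)).comp x (hasDerivAt_neg x)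
  simpa [Pi.neg_def] using ((h.const_mul a).neg)

lemma aux_inj (a : ℝ) (ha : 0 < a) : Set.InjOn (fun x : ℝ => -(a * Real.exp (-x))) (Ioi 0) := by
  intro x _ y _ h
  simp only [neg_inj] at h
  have h' := Real.exp_injective (mul_left_cancel₀ ha.ne' h); linarith

lemma aux_image (a : ℝ) (ha : 0 < a) :
    (fun x : ℝ => -(a * Real.exp (-x))) '' Ioi 0 = Ioo (-a) 0 := by
  ext t
  constructor
  · rintro ⟨x, hx, rfl⟩
    have hx0 : (0:ℝ) < x := hx
    have h1 : Real.exp (-x) < 1 := by rw [Real.exp_lt_one_iff]; linarith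
    have h2 : 0 < Real.exp (-x) := Real.exp_pos _
    show -a < -(a * Real.exp (-x)) ∧ -(a * Real.exp (-x)) < 0
    constructor
    · nlinarith
    · nlinarith
  · rintro ⟨h1, h2⟩
    refine ⟨-Real.log (-t / a), ?_, ?_⟩
    · simp only [mem_Ioi]
      have hpos : 0 < -t / a := div_pos (by linarith) ha
      have hlt : -t / a < 1 := by rw [div_lt_one ha]; linarith
      have := Real.log_neg hpos hlt
      linarith
    · have hpos : 0 < -t / a := div_pos (by linarith) ha
      simp only [neg_neg]
      rw [Real.exp_log hpos]
      field_simp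

lemma aux_cov (a : ℝ) (ha : 0 < a) (g : ℝ → ℂ) :
    (∫ t in Ioo (-a) 0, g t)
      = ∫ x in Ioi (0:ℝ), (a * Real.exp (-x)) • g (-(a * Real.exp (-x))) := by
  rw [← aux_image a ha,
    integral_image_eq_integral_abs_deriv_smul measurableSet_Ioi
      (fun x _ => (aux_hasDeriv a x).hasDerivWithinAt) (aux_inj a ha) g]
  congr 1
  funext x
  rw [abs_of_pos (by positivity)]

lemma aux_cov_int (a : ℝ) (ha : 0 < a) (g : ℝ → ℂ) :
    IntegrableOn g (Ioo (-a) 0) ↔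
      IntegrableOn (fun x => (a * Real.exp (-x)) • g (-(a * Real.exp (-x)))) (Ioi 0) := by
  rw [← aux_image a ha,
    integrableOn_image_iff_integrableOn_abs_deriv_smul measurableSet_Ioi
      (fun x _ => (aux_hasDeriv a x).hasDerivWithinAt) (aux_inj a ha) g]
  constructor <;> intro h <;> refine h.congr_fun (fun x _ => ?_) measurableSet_Ioi
  · dsimp only; rw [abs_of_pos (by positivity : (0:ℝ) < a * Real.exp (-x))]
  · dsimp only; rw [abs_of_pos (by positivity : (0:ℝ) < a * Real.exp (-x))]


lemma aux_gamma_id (μ : ℂ) (hμ : -1 < μ.re) {n : ℕ} (hn : 1 ≤ n) :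
    ∫ x in Ioi (0:ℝ), (Real.exp (-((n:ℝ) * x)) : ℂ) * (x:ℂ)^μ
      = Complex.Gamma (μ+1) * (n:ℂ)^(-μ-1) := by
  have hn0 : (0:ℝ) < (n:ℝ) := by exact_mod_cast Nat.lt_of_lt_of_le Nat.zero_lt_one hn
  have hre : 0 < (μ+1).re := by simp only [Complex.add_re, Complex.one_re]; linarith
  have h := integral_cpow_mul_exp_neg_mul_Ioi hre hn0
  have heq : ∀ x ∈ Ioi (0:ℝ),
      (Real.exp (-((n:ℝ) * x)) : ℂ) * (x:ℂ)^μ = (x:ℂ) ^ (μ+1-1) * Complex.exp (-((n:ℝ) * x)) := by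
    intro x _
    rw [add_sub_cancel_right, mul_comm]
    congr 1
    rw [Complex.ofReal_exp]
    congr 1
    push_cast
    ring
  rw [setIntegral_congr_fun measurableSet_Ioi heq, h]
  have harg : ((n:ℝ):ℂ).arg ≠ Real.pi := by
    rw [Complex.arg_ofReal_of_nonneg hn0.le]
    exact (Real.pi_ne_zero).symm
  have hexp : (-μ-1 : ℂ) = -(μ+1) := by ring
  rw [hexp, Complex.cpow_neg, one_div, Complex.inv_cpow _ _ harg]
  push_cast
  ring

lemma aux_int_cpow (μ : ℂ) (hμ : -1 < μ.re) {n : ℕ} (hn : 1 ≤ n) :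
    IntegrableOn (fun x : ℝ => (Real.exp (-((n:ℝ)*x)) : ℂ) * (x:ℂ)^μ) (Ioi 0) := by
  have hre : 0 < (μ+1).re := by simp only [Complex.add_re, Complex.one_re]; linarith
  have hG := Complex.GammaIntegral_convergent hre
  have hn1 : (1:ℝ) ≤ (n:ℝ) := by exact_mod_cast hn
  refine Integrable.mono hG ?_ ?_
  · -- AEStronglyMeasurable
    apply ContinuousOn.aestronglyMeasurable _ measurableSet_Ioi
    apply ContinuousOn.mul
    · exact (Continuous.continuousOn (by continuity))
    · intro x hx
      exact (Complex.continuousAt_ofReal_cpow_const x μ (Or.inr (ne_of_gt hx))).continuousWithinAt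
  · rw [ae_restrict_iff' measurableSet_Ioi]
    filter_upwards with x
    intro hx
    have hx0 : (0:ℝ) < x := hx
    rw [norm_mul, norm_mul, Complex.norm_real, Complex.norm_real]
    rw [Real.norm_eq_abs, Real.norm_eq_abs, abs_of_pos (Real.exp_pos _), abs_of_pos (Real.exp_pos _)]
    have h1 : ‖(x:ℂ)^μ‖ = x ^ μ.re := by
      rw [Complex.norm_cpow_eq_rpow_re_of_pos hx0]
    have h2 : ‖(x:ℂ)^(μ+1-1)‖ = x ^ μ.re := by
      rw [add_sub_cancel_right, Complex.norm_cpow_eq_rpow_re_of_pos hx0]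
    rw [h1, h2]
    apply mul_le_mul_of_nonneg_right _ (Real.rpow_nonneg hx0.le _)
    apply Real.exp_le_exp.mpr
    nlinarith

lemma aux_int_rpow (c : ℝ) (hc : 0 < c) {n : ℕ} (hn : 1 ≤ n) :
    IntegrableOn (fun x : ℝ => Real.exp (-((n:ℝ)*x)) * x ^ (c-1)) (Ioi 0) := by
  have hG := Real.GammaIntegral_convergent hc
  have hn1 : (1:ℝ) ≤ (n:ℝ) := by exact_mod_cast hn
  refine Integrable.mono hG ?_ ?_
  · apply ContinuousOn.aestronglyMeasurable _ measurableSet_Ioi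
    apply ContinuousOn.mul
    · exact (Continuous.continuousOn (by continuity))
    · intro x hx
      exact (Real.continuousAt_rpow_const x _ (Or.inl (ne_of_gt hx))).continuousWithinAt
  · rw [ae_restrict_iff' measurableSet_Ioi]
    filter_upwards with x
    intro hx
    have hx0 : (0:ℝ) < x := hx
    have e1 : ‖Real.exp (-((n:ℝ)*x)) * x ^ (c-1)‖ = Real.exp (-((n:ℝ)*x)) * x ^ (c-1) := by
      rw [Real.norm_eq_abs, _root_.abs_of_nonneg (by positivity)]
    have e2 : ‖Real.exp (-x) * x ^ (c-1)‖ = Real.exp (-x) * x ^ (c-1) := by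
      rw [Real.norm_eq_abs, _root_.abs_of_nonneg (by positivity)]
    rw [e1, e2]
    apply mul_le_mul_of_nonneg_right _ (Real.rpow_nonneg hx0.le _)
    apply Real.exp_le_exp.mpr
    nlinarith

lemma aux_ptwise (a : ℝ) (ha : 0 < a) (μ : ℂ) (φ f₁ : ℝ → ℂ)
    (hφ : ∀ t ∈ Icc (-a) 0, φ t = ((t + a : ℝ) : ℂ) ^ μ * f₁ (t + a))
    (n : ℕ) {x : ℝ} (hx : 0 < x) :
    (a * Real.exp (-x)) • (φ (-(a * Real.exp (-x))) * ((-(a * Real.exp (-x)) : ℝ) : ℂ) ^ n)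
      = ((-1:ℂ)^n * (a:ℂ)^((n:ℂ)+μ+1)) *
        ((Real.exp (-((n:ℝ)*x)) : ℂ) *
          ((Real.exp (-x) : ℂ) * ((1 - Real.exp (-x) : ℝ):ℂ)^μ * f₁ (a * (1 - Real.exp (-x))))) := by
  set e : ℝ := Real.exp (-x) with he
  have he0 : 0 < e := Real.exp_pos _
  have he1 : e ≤ 1 := by rw [he, Real.exp_le_one_iff]; linarith
  have hu0 : 0 ≤ 1 - e := by linarith
  have ht : -(a * e) ∈ Icc (-a) 0 := by
    constructor <;> nlinarith
  have hφ' := hφ _ ht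
  have harg : (-(a*e) + a : ℝ) = a * (1 - e) := by ring
  rw [hφ', harg]
  have hsplit : ((a * (1 - e) : ℝ) : ℂ) ^ μ = (a:ℂ)^μ * ((1 - e : ℝ):ℂ)^μ := by
    rw [Complex.ofReal_mul]
    exact mul_cpow_ofReal_nonneg ha.le hu0 μ
  have hpow : ((-(a * e) : ℝ) : ℂ) ^ n = (-1:ℂ)^n * (a:ℂ)^n * ((e:ℝ):ℂ)^n := by
    push_cast
    ring
  have hen : ((e:ℝ):ℂ)^n = ((Real.exp (-((n:ℝ)*x)) : ℝ) : ℂ) := by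
    rw [he]
    norm_cast
    rw [← Real.exp_nat_mul]
    ring_nf
  have hA : (a:ℂ)^((n:ℂ)+μ+1) = (a:ℂ)^n * ((a:ℂ)^μ * (a:ℂ)) := by
    have ha0 : (a:ℂ) ≠ 0 := by exact_mod_cast ha.ne'
    rw [Complex.cpow_add _ _ ha0, Complex.cpow_add _ _ ha0, Complex.cpow_one,
      Complex.cpow_natCast, mul_assoc]
  rw [hsplit, hpow, hen, hA]
  rw [Complex.real_smul]
  push_cast
  ring


private lemma ion_mono {E : Type*} [NormedAddCommGroup E] {f : ℝ → E} {s t : Set ℝ}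
    (h : Integrable f (volume.restrict t)) (hst : s ⊆ t) : IntegrableOn f s volume :=
  MeasureTheory.IntegrableOn.mono_set h hst

private lemma ion_congr {E : Type*} [NormedAddCommGroup E] {f g : ℝ → E} {s : Set ℝ}
    (h : Integrable f (volume.restrict s)) (heq : ∀ x ∈ s, f x = g x) (hs : MeasurableSet s) :
    IntegrableOn g s volume :=
  MeasureTheory.IntegrableOn.congr_fun h heq hs

/-- Moment asymptotics at the left endpoint:
`∫_{-a}^0 φ(t) t^n dt = (-1)^n f₁(0) Γ(μ+1) n^{-μ-1} a^{n+μ+1} + O(n^{-μ-2} a^n)`. -/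
theorem left_endpoint_moment_asymptotics
    (a : ℝ) (ha : 0 < a)
    (μ : ℂ) (hμ : -1 < μ.re)
    (φ f₁ : ℝ → ℂ)
    (hint : IntervalIntegrable φ volume (-a) 0)
    (hf₁int : IntervalIntegrable f₁ volume 0 a)
    (hφ : ∀ t ∈ Set.Icc (-a) 0, φ t = ((t + a : ℝ) : ℂ) ^ μ * f₁ (t + a))
    (hf₁0 : f₁ 0 ≠ 0)
    (hf₁ : ∃ δ > (0 : ℝ), (∀ t ∈ Set.Icc (0 : ℝ) δ, DifferentiableAt ℝ f₁ t) ∧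
          ∃ M : ℝ, ∀ t ∈ Set.Icc (0 : ℝ) δ, ‖deriv f₁ t‖ ≤ M) :
    (fun n : ℕ =>
        (∫ t in (-a)..(0 : ℝ), φ t * (t : ℂ) ^ n) -
          (-1) ^ n * f₁ 0 * Complex.Gamma (μ + 1) * (n : ℂ) ^ (-μ - 1) *
            (a : ℂ) ^ ((n : ℂ) + μ + 1))
      =O[atTop] (fun n : ℕ => ‖((n : ℂ) ^ (-μ - 2))‖ * a ^ n) := by
  obtain ⟨δ, hδ, hdiff, M, hMb⟩ := hf₁
  -- Lipschitz bound for f₁ near 0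
  have hM' : (0:ℝ) ≤ max M 0 := le_max_right _ _
  have hMb' : ∀ t ∈ Icc (0:ℝ) δ, ‖deriv f₁ t‖ ≤ max M 0 :=
    fun t ht => (hMb t ht).trans (le_max_left _ _)
  have hf₁lip : ∀ y ∈ Icc (0:ℝ) δ, ‖f₁ y - f₁ 0‖ ≤ max M 0 * y := by
    intro y hy
    have h := Convex.norm_image_sub_le_of_norm_deriv_le hdiff hMb' (convex_Icc 0 δ)
      (left_mem_Icc.mpr hδ.le) hy
    simpa [Real.norm_eq_abs, _root_.abs_of_nonneg hy.1] using h
  -- the cutoff point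
  obtain ⟨x₀, hx₀, hx₀1, hx₀μ0, hx₀δ0⟩ :
      ∃ x₀ : ℝ, 0 < x₀ ∧ x₀ ≤ 1 ∧ ‖μ‖ * x₀ ≤ 1 ∧ a * x₀ ≤ δ := by
    refine ⟨min (min 1 (‖μ‖+1)⁻¹) (δ/a), ?_, ?_, ?_, ?_⟩
    · exact lt_min (lt_min one_pos (by positivity)) (by positivity)
    · exact (min_le_left _ _).trans (min_le_left _ _)
    · have h1 : min (min 1 (‖μ‖+1)⁻¹) (δ/a) ≤ (‖μ‖+1)⁻¹ :=
        (min_le_left _ _).trans (min_le_right _ _)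
      have h2 : (0:ℝ) < ‖μ‖ + 1 := by positivity
      calc ‖μ‖ * min (min 1 (‖μ‖+1)⁻¹) (δ/a) ≤ (‖μ‖+1) * (‖μ‖+1)⁻¹ := by
            apply mul_le_mul (by linarith) h1 _ h2.le
            exact le_min (le_min zero_le_one (by positivity)) (by positivity)
        _ = 1 := mul_inv_cancel₀ h2.ne'
    · have h1 : min (min 1 (‖μ‖+1)⁻¹) (δ/a) ≤ δ/a := min_le_right _ _
      calc a * min (min 1 (‖μ‖+1)⁻¹) (δ/a) ≤ a * (δ/a) := mul_le_mul_of_nonneg_left h1 ha.le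
        _ = δ := by field_simp
  have hx₀μ : ∀ x ∈ Ioc (0:ℝ) x₀, ‖μ‖ * x ≤ 1 := by
    intro x hx
    calc ‖μ‖ * x ≤ ‖μ‖ * x₀ := mul_le_mul_of_nonneg_left hx.2 (norm_nonneg μ)
      _ ≤ 1 := hx₀μ0
  have hx₀δ : ∀ x ∈ Ioc (0:ℝ) x₀, a * x ≤ δ := by
    intro x hx
    calc a * x ≤ a * x₀ := mul_le_mul_of_nonneg_left hx.2 ha.le
      _ ≤ δ := hx₀δ0
  -- constants
  set ν : ℝ := μ.re + 2 with hνdef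
  have hν : (0:ℝ) < ν := by simp only [hνdef]; linarith
  have hν1 : ν - 1 = μ.re + 1 := by simp only [hνdef]; ring
  set c₁ : ℝ := max 1 ((2:ℝ) ^ (-μ.re)) * (max M 0 * a) + ‖f₁ 0‖ * (2 * ‖μ‖ + 1) with hc₁def
  have hc₁ : 0 ≤ c₁ := by
    apply add_nonneg
    · apply mul_nonneg (le_trans zero_le_one (le_max_left _ _)) (by positivity)
    · positivity
  -- kernel bound on (0, x₀]
  have hker : ∀ x ∈ Ioc (0:ℝ) x₀, ‖(((Real.exp (-x) : ℂ) * ((1 - Real.exp (-x) : ℝ) : ℂ) ^ μ * f₁ (a * (1 - Real.exp (-x)))) - f₁ 0 * (x : ℂ) ^ μ)‖ ≤ c₁ * x ^ (ν - 1) := by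
    intro x hx
    rw [hν1]
    exact aux_kernel μ f₁ a δ (max M 0) ha hM' hf₁lip hx.1 (hx.2.trans hx₀1)
      (hx₀μ x hx) (hx₀δ x hx)
  -- integrability of E n * G  (n ≥ 1)
  have hGint : ∀ n : ℕ, IntegrableOn (fun x : ℝ => (Real.exp (-((n:ℝ) * x)) : ℂ) * ((Real.exp (-x) : ℂ) * ((1 - Real.exp (-x) : ℝ) : ℂ) ^ μ * f₁ (a * (1 - Real.exp (-x))))) (Ioi 0) := by
    intro n
    have hg : IntegrableOn (fun t : ℝ => φ t * (t:ℂ)^n) (Ioo (-a) 0) := by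
      have := hint.mul_continuousOn (g := fun t : ℝ => (t:ℂ)^n)
        (Continuous.continuousOn (by continuity))
      rw [intervalIntegrable_iff_integrableOn_Ioc_of_le (by linarith)] at this
      exact this.mono_set Set.Ioo_subset_Ioc_self
    have h1 := (aux_cov_int a ha _).mp hg
    have hC : ((-1:ℂ)^n * (a:ℂ)^((n:ℂ)+μ+1)) ≠ 0 := by
      apply mul_ne_zero (pow_ne_zero _ (by norm_num))
      rw [Ne, Complex.cpow_eq_zero_iff]
      push_neg
      intro h
      exact absurd h (by exact_mod_cast ha.ne')
    have h2 := h1.const_mul (((-1:ℂ)^n * (a:ℂ)^((n:ℂ)+μ+1)))⁻¹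
    refine ion_congr h2 (fun x hx => ?_) measurableSet_Ioi
    rw [aux_ptwise a ha μ φ f₁ hφ n hx]
    rw [← mul_assoc, inv_mul_cancel₀ hC, one_mul, mul_assoc]
  -- integrability of E n * Δ  (n ≥ 1)
  have hΔint : ∀ n : ℕ, 1 ≤ n → IntegrableOn (fun x : ℝ => (Real.exp (-((n:ℝ) * x)) : ℂ) * (((Real.exp (-x) : ℂ) * ((1 - Real.exp (-x) : ℝ) : ℂ) ^ μ * f₁ (a * (1 - Real.exp (-x)))) - f₁ 0 * (x : ℂ) ^ μ)) (Ioi 0) := by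
    intro n hn
    have h1 := (hGint n).sub ((aux_int_cpow μ hμ hn).const_mul (f₁ 0))
    refine ion_congr h1 (fun x hx => ?_) measurableSet_Ioi
    simp only [Pi.sub_apply]
    ring
  -- the value of the moment integral
  have hIeq : ∀ n : ℕ, (∫ t in (-a)..(0:ℝ), φ t * (t:ℂ)^n)
      = ((-1:ℂ)^n * (a:ℂ)^((n:ℂ)+μ+1)) * ∫ x in Ioi (0:ℝ), (Real.exp (-((n:ℝ) * x)) : ℂ) * ((Real.exp (-x) : ℂ) * ((1 - Real.exp (-x) : ℝ) : ℂ) ^ μ * f₁ (a * (1 - Real.exp (-x)))) := by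
    intro n
    rw [intervalIntegral.integral_of_le (by linarith : (-a:ℝ) ≤ 0),
      MeasureTheory.integral_Ioc_eq_integral_Ioo, aux_cov a ha _]
    rw [MeasureTheory.setIntegral_congr_fun measurableSet_Ioi
      (fun x hx => aux_ptwise a ha μ φ f₁ hφ n hx)]
    rw [MeasureTheory.integral_const_mul]
  -- tail constant
  set K : ℝ := ∫ x in Ioi x₀, ‖(Real.exp (-(((2:ℕ):ℝ) * x)) : ℂ) * (((Real.exp (-x) : ℂ) * ((1 - Real.exp (-x) : ℝ) : ℂ) ^ μ * f₁ (a * (1 - Real.exp (-x)))) - f₁ 0 * (x : ℂ) ^ μ)‖ with hKdef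
  have hK0 : 0 ≤ K := by
    apply MeasureTheory.integral_nonneg
    intro x; positivity
  -- main bound on the difference integral, n ≥ 2
  have hDle : ∀ n : ℕ, 2 ≤ n →
      ‖∫ x in Ioi (0:ℝ), (Real.exp (-((n:ℝ) * x)) : ℂ) * (((Real.exp (-x) : ℂ) * ((1 - Real.exp (-x) : ℝ) : ℂ) ^ μ * f₁ (a * (1 - Real.exp (-x)))) - f₁ 0 * (x : ℂ) ^ μ)‖
        ≤ c₁ * ((1/(n:ℝ))^ν * Real.Gamma ν) + Real.exp (-(((n:ℝ)-2)*x₀)) * K := by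
    intro n hn
    have hn1 : 1 ≤ n := le_trans (by norm_num) hn
    have hnR : (2:ℝ) ≤ (n:ℝ) := by exact_mod_cast hn
    have hnorm : ∀ m : ℕ, ∀ x : ℝ, ‖(Real.exp (-((m:ℝ) * x)) : ℂ) * (((Real.exp (-x) : ℂ) * ((1 - Real.exp (-x) : ℝ) : ℂ) ^ μ * f₁ (a * (1 - Real.exp (-x)))) - f₁ 0 * (x : ℂ) ^ μ)‖
        = Real.exp (-((m:ℝ) * x)) * ‖(((Real.exp (-x) : ℂ) * ((1 - Real.exp (-x) : ℝ) : ℂ) ^ μ * f₁ (a * (1 - Real.exp (-x)))) - f₁ 0 * (x : ℂ) ^ μ)‖ := by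
      intro m x
      rw [norm_mul, Complex.norm_real, Real.norm_eq_abs, _root_.abs_of_pos (Real.exp_pos _)]
    have hsplit : (∫ x in Ioi (0:ℝ), ‖(Real.exp (-((n:ℝ) * x)) : ℂ) * (((Real.exp (-x) : ℂ) * ((1 - Real.exp (-x) : ℝ) : ℂ) ^ μ * f₁ (a * (1 - Real.exp (-x)))) - f₁ 0 * (x : ℂ) ^ μ)‖)
        = (∫ x in Ioc (0:ℝ) x₀, ‖(Real.exp (-((n:ℝ) * x)) : ℂ) * (((Real.exp (-x) : ℂ) * ((1 - Real.exp (-x) : ℝ) : ℂ) ^ μ * f₁ (a * (1 - Real.exp (-x)))) - f₁ 0 * (x : ℂ) ^ μ)‖)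
          + ∫ x in Ioi x₀, ‖(Real.exp (-((n:ℝ) * x)) : ℂ) * (((Real.exp (-x) : ℂ) * ((1 - Real.exp (-x) : ℝ) : ℂ) ^ μ * f₁ (a * (1 - Real.exp (-x)))) - f₁ 0 * (x : ℂ) ^ μ)‖ := by
      rw [← Ioc_union_Ioi_eq_Ioi hx₀.le]
      exact MeasureTheory.setIntegral_union (Set.Ioc_disjoint_Ioi le_rfl) measurableSet_Ioi
        (ion_mono ((hΔint n hn1).norm) Set.Ioc_subset_Ioi_self)
        (ion_mono ((hΔint n hn1).norm) (Set.Ioi_subset_Ioi hx₀.le))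
    have hPartA : (∫ x in Ioc (0:ℝ) x₀, ‖(Real.exp (-((n:ℝ) * x)) : ℂ) * (((Real.exp (-x) : ℂ) * ((1 - Real.exp (-x) : ℝ) : ℂ) ^ μ * f₁ (a * (1 - Real.exp (-x)))) - f₁ 0 * (x : ℂ) ^ μ)‖)
        ≤ c₁ * ((1/(n:ℝ))^ν * Real.Gamma ν) := by
      have hrint : IntegrableOn (fun x : ℝ => x ^ (ν-1) * Real.exp (-((n:ℝ)*x))) (Ioi 0) :=
        ion_congr (aux_int_rpow ν hν hn1) (fun x _ => mul_comm _ _) measurableSet_Ioi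
      have h1 : (∫ x in Ioc (0:ℝ) x₀, ‖(Real.exp (-((n:ℝ) * x)) : ℂ) * (((Real.exp (-x) : ℂ) * ((1 - Real.exp (-x) : ℝ) : ℂ) ^ μ * f₁ (a * (1 - Real.exp (-x)))) - f₁ 0 * (x : ℂ) ^ μ)‖)
          ≤ ∫ x in Ioc (0:ℝ) x₀, c₁ * (x ^ (ν-1) * Real.exp (-((n:ℝ)*x))) := by
        apply MeasureTheory.setIntegral_mono_on
        · exact ion_mono ((hΔint n hn1).norm) Set.Ioc_subset_Ioi_self
        · exact ion_mono (hrint.const_mul c₁) Set.Ioc_subset_Ioi_self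
        · exact measurableSet_Ioc
        · intro x hx
          rw [hnorm n x]
          calc Real.exp (-((n:ℝ) * x)) * ‖(((Real.exp (-x) : ℂ) * ((1 - Real.exp (-x) : ℝ) : ℂ) ^ μ * f₁ (a * (1 - Real.exp (-x)))) - f₁ 0 * (x : ℂ) ^ μ)‖
              ≤ Real.exp (-((n:ℝ) * x)) * (c₁ * x ^ (ν-1)) :=
                mul_le_mul_of_nonneg_left (hker x hx) (Real.exp_pos _).le
            _ = c₁ * (x ^ (ν-1) * Real.exp (-((n:ℝ)*x))) := by ring
      have h2 : (∫ x in Ioc (0:ℝ) x₀, c₁ * (x ^ (ν-1) * Real.exp (-((n:ℝ)*x))))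
          ≤ ∫ x in Ioi (0:ℝ), c₁ * (x ^ (ν-1) * Real.exp (-((n:ℝ)*x))) := by
        apply MeasureTheory.setIntegral_mono_set (hrint.const_mul c₁)
        · rw [Filter.EventuallyLE]
          rw [MeasureTheory.ae_restrict_iff' measurableSet_Ioi]
          filter_upwards with x
          intro hx
          have hx0 : (0:ℝ) < x := hx
          simp only [Pi.zero_apply]
          positivity
        · exact Filter.Eventually.of_forall Set.Ioc_subset_Ioi_self
      have h3 : (∫ x in Ioi (0:ℝ), c₁ * (x ^ (ν-1) * Real.exp (-((n:ℝ)*x))))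
          = c₁ * ((1/(n:ℝ))^ν * Real.Gamma ν) := by
        rw [MeasureTheory.integral_const_mul]
        congr 1
        have hn0 : (0:ℝ) < (n:ℝ) := by exact_mod_cast Nat.lt_of_lt_of_le Nat.zero_lt_one hn1
        exact Real.integral_rpow_mul_exp_neg_mul_Ioi hν hn0
      linarith
    have hPartB : (∫ x in Ioi x₀, ‖(Real.exp (-((n:ℝ) * x)) : ℂ) * (((Real.exp (-x) : ℂ) * ((1 - Real.exp (-x) : ℝ) : ℂ) ^ μ * f₁ (a * (1 - Real.exp (-x)))) - f₁ 0 * (x : ℂ) ^ μ)‖)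
        ≤ Real.exp (-(((n:ℝ)-2)*x₀)) * K := by
      have h1 : (∫ x in Ioi x₀, ‖(Real.exp (-((n:ℝ) * x)) : ℂ) * (((Real.exp (-x) : ℂ) * ((1 - Real.exp (-x) : ℝ) : ℂ) ^ μ * f₁ (a * (1 - Real.exp (-x)))) - f₁ 0 * (x : ℂ) ^ μ)‖)
          ≤ ∫ x in Ioi x₀, Real.exp (-(((n:ℝ)-2)*x₀)) * ‖(Real.exp (-(((2:ℕ):ℝ) * x)) : ℂ) * (((Real.exp (-x) : ℂ) * ((1 - Real.exp (-x) : ℝ) : ℂ) ^ μ * f₁ (a * (1 - Real.exp (-x)))) - f₁ 0 * (x : ℂ) ^ μ)‖ := by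
        apply MeasureTheory.setIntegral_mono_on
        · exact ion_mono ((hΔint n hn1).norm) (Set.Ioi_subset_Ioi hx₀.le)
        · exact MeasureTheory.Integrable.const_mul (ion_mono ((hΔint 2 (by norm_num)).norm) (Set.Ioi_subset_Ioi hx₀.le)) _
        · exact measurableSet_Ioi
        · intro x hx
          rw [hnorm n x, hnorm 2 x, ← mul_assoc]
          apply mul_le_mul_of_nonneg_right _ (norm_nonneg _)
          rw [← Real.exp_add]
          apply Real.exp_le_exp.mpr
          have hxx : x₀ ≤ x := le_of_lt hx
          have hfac : ((n:ℝ)-2)*x₀ ≤ ((n:ℝ)-2)*x :=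
            mul_le_mul_of_nonneg_left hxx (by linarith : (0:ℝ) ≤ (n:ℝ)-2)
          push_cast
          linarith
      have h2 : (∫ x in Ioi x₀, Real.exp (-(((n:ℝ)-2)*x₀)) * ‖(Real.exp (-(((2:ℕ):ℝ) * x)) : ℂ) * (((Real.exp (-x) : ℂ) * ((1 - Real.exp (-x) : ℝ) : ℂ) ^ μ * f₁ (a * (1 - Real.exp (-x)))) - f₁ 0 * (x : ℂ) ^ μ)‖)
          = Real.exp (-(((n:ℝ)-2)*x₀)) * K := by
        rw [MeasureTheory.integral_const_mul]
      linarith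
    calc ‖∫ x in Ioi (0:ℝ), (Real.exp (-((n:ℝ) * x)) : ℂ) * (((Real.exp (-x) : ℂ) * ((1 - Real.exp (-x) : ℝ) : ℂ) ^ μ * f₁ (a * (1 - Real.exp (-x)))) - f₁ 0 * (x : ℂ) ^ μ)‖
        ≤ ∫ x in Ioi (0:ℝ), ‖(Real.exp (-((n:ℝ) * x)) : ℂ) * (((Real.exp (-x) : ℂ) * ((1 - Real.exp (-x) : ℝ) : ℂ) ^ μ * f₁ (a * (1 - Real.exp (-x)))) - f₁ 0 * (x : ℂ) ^ μ)‖ :=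
          MeasureTheory.norm_integral_le_integral_norm _
      _ = (∫ x in Ioc (0:ℝ) x₀, ‖(Real.exp (-((n:ℝ) * x)) : ℂ) * (((Real.exp (-x) : ℂ) * ((1 - Real.exp (-x) : ℝ) : ℂ) ^ μ * f₁ (a * (1 - Real.exp (-x)))) - f₁ 0 * (x : ℂ) ^ μ)‖)
          + ∫ x in Ioi x₀, ‖(Real.exp (-((n:ℝ) * x)) : ℂ) * (((Real.exp (-x) : ℂ) * ((1 - Real.exp (-x) : ℝ) : ℂ) ^ μ * f₁ (a * (1 - Real.exp (-x)))) - f₁ 0 * (x : ℂ) ^ μ)‖ := hsplit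
      _ ≤ c₁ * ((1/(n:ℝ))^ν * Real.Gamma ν) + Real.exp (-(((n:ℝ)-2)*x₀)) * K :=
          add_le_add hPartA hPartB
  -- identify D n with the integral of E n * Δ, n ≥ 1
  have hDid : ∀ n : ℕ, 1 ≤ n →
      (∫ x in Ioi (0:ℝ), (Real.exp (-((n:ℝ) * x)) : ℂ) * ((Real.exp (-x) : ℂ) * ((1 - Real.exp (-x) : ℝ) : ℂ) ^ μ * f₁ (a * (1 - Real.exp (-x))))) - f₁ 0 * Complex.Gamma (μ+1) * (n:ℂ)^(-μ-1)
        = ∫ x in Ioi (0:ℝ), (Real.exp (-((n:ℝ) * x)) : ℂ) * (((Real.exp (-x) : ℂ) * ((1 - Real.exp (-x) : ℝ) : ℂ) ^ μ * f₁ (a * (1 - Real.exp (-x)))) - f₁ 0 * (x : ℂ) ^ μ) := by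
    intro n hn
    rw [mul_assoc, ← aux_gamma_id μ hμ hn, ← MeasureTheory.integral_const_mul,
      ← MeasureTheory.integral_sub (hGint n) ((aux_int_cpow μ hμ hn).const_mul (f₁ 0))]
    congr 1
    funext x
    ring
  -- final assembly
  rw [isBigO_iff]
  refine ⟨a ^ (μ.re + 1) * (c₁ * Real.Gamma ν + Real.exp (2*x₀) * K), ?_⟩
  have htend := (tendsto_rpow_mul_exp_neg_mul_atTop_nhds_zero ν x₀ hx₀).comp
    (tendsto_natCast_atTop_atTop (R := ℝ))
  have hev : ∀ᶠ n : ℕ in atTop, (n:ℝ)^ν * Real.exp (-x₀ * (n:ℝ)) ≤ 1 :=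
    htend.eventually (eventually_le_nhds one_pos)
  filter_upwards [hev, Filter.eventually_ge_atTop 2] with n h1 h2
  have hn1 : 1 ≤ n := le_trans (by norm_num) h2
  have hn0 : (0:ℝ) < (n:ℝ) := by exact_mod_cast Nat.lt_of_lt_of_le Nat.zero_lt_one hn1
  have hn0' : 0 < n := Nat.lt_of_lt_of_le Nat.zero_lt_one hn1
  -- rewrite LHS
  have hL : (∫ t in (-a)..(0:ℝ), φ t * (t:ℂ)^n) -
        (-1) ^ n * f₁ 0 * Complex.Gamma (μ + 1) * (n : ℂ) ^ (-μ - 1) * (a : ℂ) ^ ((n : ℂ) + μ + 1)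
      = ((-1:ℂ)^n * (a:ℂ)^((n:ℂ)+μ+1)) * ∫ x in Ioi (0:ℝ), (Real.exp (-((n:ℝ) * x)) : ℂ) * (((Real.exp (-x) : ℂ) * ((1 - Real.exp (-x) : ℝ) : ℂ) ^ μ * f₁ (a * (1 - Real.exp (-x)))) - f₁ 0 * (x : ℂ) ^ μ) := by
    rw [hIeq n, ← hDid n hn1]
    ring
  rw [hL]
  -- norms
  have hAnorm : ‖(-1:ℂ)^n * (a:ℂ)^((n:ℂ)+μ+1)‖ = a^n * a^(μ.re+1) := by
    rw [norm_mul, norm_pow, norm_neg, norm_one, one_pow, one_mul]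
    rw [Complex.norm_cpow_eq_rpow_re_of_pos ha]
    have : ((n:ℂ)+μ+1).re = (n:ℝ) + (μ.re+1) := by
      simp only [Complex.add_re, Complex.natCast_re, Complex.one_re]
      ring
    rw [this, Real.rpow_add ha, Real.rpow_natCast]
  have hRnorm : ‖(n:ℂ)^(-μ-2)‖ = (n:ℝ)^(-ν) := by
    rw [Complex.norm_natCast_cpow_of_pos hn0']
    congr 1
    simp only [Complex.sub_re, Complex.neg_re, Complex.re_ofNat, hνdef]
    ring
  have hexp2 : Real.exp (-(((n:ℝ)-2)*x₀)) ≤ Real.exp (2*x₀) * (n:ℝ)^(-ν) := by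
    have he : Real.exp (-(((n:ℝ)-2)*x₀)) = Real.exp (2*x₀) * Real.exp (-x₀ * (n:ℝ)) := by
      rw [← Real.exp_add]
      ring_nf
    rw [he]
    apply mul_le_mul_of_nonneg_left _ (Real.exp_pos _).le
    have hpow : (0:ℝ) < (n:ℝ)^ν := Real.rpow_pos_of_pos hn0 _
    rw [Real.rpow_neg hn0.le]
    calc Real.exp (-x₀ * (n:ℝ)) = ((n:ℝ)^ν)⁻¹ * ((n:ℝ)^ν * Real.exp (-x₀ * (n:ℝ))) := by
          field_simp
        _ ≤ ((n:ℝ)^ν)⁻¹ * 1 := mul_le_mul_of_nonneg_left h1 (inv_nonneg.mpr hpow.le)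
        _ = ((n:ℝ)^ν)⁻¹ := mul_one _
  have hGammaν : (0:ℝ) < Real.Gamma ν := Real.Gamma_pos_of_pos hν
  have hinv : ((1:ℝ)/(n:ℝ))^ν = (n:ℝ)^(-ν) := by
    rw [one_div, Real.inv_rpow hn0.le, ← Real.rpow_neg hn0.le]
  -- final inequality
  rw [norm_mul, hAnorm]
  have hDn := hDle n h2
  rw [hinv] at hDn
  have hrpos : (0:ℝ) < (n:ℝ)^(-ν) := Real.rpow_pos_of_pos hn0 _
  have hRHS : ‖‖(n:ℂ)^(-μ-2)‖ * a^n‖ = (n:ℝ)^(-ν) * a^n := by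
    rw [Real.norm_eq_abs, _root_.abs_of_nonneg (by positivity), hRnorm]
  rw [hRHS]
  calc a^n * a^(μ.re+1) * ‖∫ x in Ioi (0:ℝ), (Real.exp (-((n:ℝ) * x)) : ℂ) * (((Real.exp (-x) : ℂ) * ((1 - Real.exp (-x) : ℝ) : ℂ) ^ μ * f₁ (a * (1 - Real.exp (-x)))) - f₁ 0 * (x : ℂ) ^ μ)‖
      ≤ a^n * a^(μ.re+1) * (c₁ * ((n:ℝ)^(-ν) * Real.Gamma ν) + Real.exp (-(((n:ℝ)-2)*x₀)) * K) := by
        apply mul_le_mul_of_nonneg_left hDn (by positivity)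
    _ ≤ a^n * a^(μ.re+1) * (c₁ * ((n:ℝ)^(-ν) * Real.Gamma ν) + (Real.exp (2*x₀) * (n:ℝ)^(-ν)) * K) := by
        apply mul_le_mul_of_nonneg_left _ (by positivity)
        apply add_le_add_right
        exact mul_le_mul_of_nonneg_right hexp2 hK0
    _ = a ^ (μ.re + 1) * (c₁ * Real.Gamma ν + Real.exp (2*x₀) * K) * ((n:ℝ)^(-ν) * a^n) := by
        ring
end
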